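/- arXiv:1210.5088 — 5 statements merged into one kernel-verified Lean document; each statement's English description precedes it below -/
import Mathlib

section
/- Let d ≥ 1 and T > 0. Suppose v : ℝ^d × [0,T] → ℝ^d and p, φ, μ : ℝ^d × [0,T] → ℝ are smooth, supported for every t in a fixed compact set K ⊂ ℝ^d, and satisfy pointwise on ℝ^d × (0,T) the system ρ(φ)∂ₜv + ((ρ(φ)v + ρ′ j)·∇)v − div(2η(φ)Dv) + ∇p = μ∇φ, ∂ₜφ + ⟨v,∇φ⟩ − div(M(φ)∇μ) = 0, μ = −Δφ + F′(φ), div v = 0, where j := −M(φ)∇μ. Then the energy identity holds: (1/2)∫_{ℝ^d} ρ(φ(·,T))|v(·,T)|² + (1/2)∫_{ℝ^d} |∇φ(·,T)|² + ∫_{ℝ^d} F(φ(·,T)) + ∫₀^T∫_{ℝ^d} M(φ)|∇μ|² + ∫₀^T∫_{ℝ^d} 2η(φ)|Dv|² = (1/2)∫_{ℝ^d} ρ(φ(·,0))|v(·,0)|² + (1/2)∫_{ℝ^d} |∇φ(·,0)|² + ∫_{ℝ^d} F(φ(·,0)). -/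
open MeasureTheory Set Matrix

noncomputable section

/-- Euclidean dot product on `Fin d → ℝ`. -/
def dot {d : ℕ} (a b : Fin d → ℝ) : ℝ := ∑ i, a i * b i

/-- Spatial gradient of a scalar field. -/
def grad {d : ℕ} (f : (Fin d → ℝ) → ℝ) (x : Fin d → ℝ) : Fin d → ℝ :=
  fun i => fderiv ℝ f x (Pi.single i 1)

/-- Jacobian matrix `(∇v)_{ij} = ∂v_i/∂x_j` of a vector field. -/
def jac {d : ℕ} (v : (Fin d → ℝ) → Fin d → ℝ) (x : Fin d → ℝ) :
    Matrix (Fin d) (Fin d) ℝ := Matrix.of fun i j => fderiv ℝ v x (Pi.single j 1) i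

/-- Divergence `div v = tr(∇v)` of a vector field. -/
def divg {d : ℕ} (v : (Fin d → ℝ) → Fin d → ℝ) (x : Fin d → ℝ) : ℝ :=
  ∑ i, fderiv ℝ v x (Pi.single i 1) i

/-- Symmetrized gradient `Dv = (∇v + (∇v)ᵀ)/2`. -/
def symGrad {d : ℕ} (v : (Fin d → ℝ) → Fin d → ℝ) (x : Fin d → ℝ) :
    Matrix (Fin d) (Fin d) ℝ :=
  Matrix.of fun i j => (jac v x i j + jac v x j i) / 2

/-- Frobenius inner product of matrices. -/
def frob {d : ℕ} (A B : Matrix (Fin d) (Fin d) ℝ) : ℝ := ∑ i, ∑ j, A i j * B i j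

/-- Laplacian of a scalar field. -/
def lap {d : ℕ} (f : (Fin d → ℝ) → ℝ) (x : Fin d → ℝ) : ℝ :=
  ∑ i, fderiv ℝ (fun y => fderiv ℝ f y (Pi.single i 1)) x (Pi.single i 1)

/-- Affine mass density `ρ(s) = (ρ̂₂+ρ̂₁)/2 + (ρ̂₂-ρ̂₁)/2 · s`. -/
def rhoAff (ρ₁ ρ₂ s : ℝ) : ℝ := (ρ₂ + ρ₁) / 2 + (ρ₂ - ρ₁) / 2 * s


/-- Integral of a partial derivative of a compactly supported `C¹` function vanishes. -/
lemma integral_pderiv_eq_zero {d : ℕ} {K : Set (Fin d → ℝ)} (hK : IsCompact K)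
    {f : (Fin d → ℝ) → ℝ} (hf : ContDiff ℝ (⊤ : ℕ∞) f) (h0 : ∀ x ∉ K, f x = 0) (k : Fin d) :
    ∫ x, fderiv ℝ f x (Pi.single k 1) = 0 := by
  obtain ⟨n, rfl⟩ : ∃ n, d = n + 1 := ⟨d - 1, (Nat.succ_pred_eq_of_pos k.pos).symm⟩
  -- derivative vanishes off K
  have hK' : ∀ x ∉ K, fderiv ℝ f x = 0 := by
    intro x hx
    have hev : f =ᶠ[nhds x] (fun _ => (0:ℝ)) := by
      filter_upwards [hK.isClosed.isOpen_compl.mem_nhds hx] with y hy using h0 y hy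
    rw [hev.fderiv_eq, fderiv_fun_const]; rfl
  -- bounding box
  obtain ⟨R, hR⟩ := hK.isBounded.subset_closedBall 0
  set R' : ℝ := max R 0 with hR'
  have hKR : ∀ x ∈ K, ∀ i, |x i| ≤ R' := by
    intro x hx i
    have h1 : ‖x‖ ≤ R' := le_trans (by simpa using hR hx) (le_max_left _ _)
    exact le_trans (by simpa using norm_le_pi_norm x i) h1
  set a : Fin (n+1) → ℝ := fun _ => -(R' + 1) with ha
  set b : Fin (n+1) → ℝ := fun _ => R' + 1 with hb
  have hab : a ≤ b := by
    intro i; simp only [ha, hb]; nlinarith [le_max_right R 0]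
  have hKint : K ⊆ Set.pi univ fun i => Ioo (a i) (b i) := by
    intro x hx
    simp only [Set.mem_pi, mem_univ, forall_true_left, mem_Ioo, ha, hb]
    intro i
    have := hKR x hx i
    constructor <;> [nlinarith [abs_le.mp this]; nlinarith [abs_le.mp this]]
  have hKIcc : K ⊆ Icc a b := hKint.trans (by
    intro x hx; simp only [Set.mem_pi, mem_univ, forall_true_left, mem_Ioo] at hx
    refine ⟨fun i => (hx i).1.le, fun i => (hx i).2.le⟩)
  have hdiff : Differentiable ℝ f := hf.differentiable (by simp)
  have hfc : Continuous (fun x => fderiv ℝ f x (Pi.single k 1)) := by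
    exact ((hf.fderiv_right (m := (⊤:ℕ∞)) (by exact_mod_cast le_top)).continuous).clm_apply continuous_const
  -- the divergence theorem on the box
  have key := integral_divergence_of_hasFDerivAt_off_countable' a b hab
    (fun i x => if i = k then f x else 0)
    (fun i x => if i = k then fderiv ℝ f x else 0) ∅ countable_empty
    (fun i => by
      by_cases h : i = k <;> simp only [h, if_true, if_false] <;>
        [exact hf.continuous.continuousOn; exact continuousOn_const])
    (fun x _ i => by
      by_cases h : i = k <;> simp only [h, if_true, if_false]
      · exact (hdiff x).hasFDerivAt
      · exact hasFDerivAt_const 0 x)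
    (by
      apply ContinuousOn.integrableOn_compact isCompact_Icc
      apply Continuous.continuousOn
      have : (fun x => ∑ i, (if i = k then fderiv ℝ f x else 0) (Pi.single i 1)) =
          fun x => fderiv ℝ f x (Pi.single k 1) := by
        funext x
        rw [Finset.sum_eq_single k] <;> simp +contextual
      rw [this]; exact hfc)
  -- faces vanish
  have hface : ∀ (i : Fin (n+1)) (c : ℝ), |c| = R' + 1 → ∀ y : Fin n → ℝ,
      f (i.insertNth c y) = 0 := by
    intro i c hc y
    apply h0
    intro hmem
    have := hKR _ hmem i
    rw [Fin.insertNth_apply_same] at this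
    rw [hc] at this; linarith
  rw [Finset.sum_eq_zero] at key
  · rw [← key]
    have h1 : ∀ x, x ∈ Icc a b → (∑ i, (if i = k then fderiv ℝ f x else 0) (Pi.single i 1))
        = fderiv ℝ f x (Pi.single k 1) := by
      intro x _
      rw [Finset.sum_eq_single k] <;> simp +contextual
    rw [setIntegral_congr_fun measurableSet_Icc h1]
    rw [setIntegral_eq_integral_of_forall_compl_eq_zero]
    intro x hx
    rw [hK' x (fun h => hx (hKIcc h))]; rfl
  · intro i _
    by_cases h : i = k
    · subst h
      simp only [if_true]
      have f1 : ∀ y, f (i.insertNth (b i) y) = 0 := fun y => hface i (b i) (by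
        simp only [hb]; rw [abs_of_nonneg] <;> nlinarith [le_max_right R 0]) y
      have f2 : ∀ y, f (i.insertNth (a i) y) = 0 := fun y => hface i (a i) (by
        simp only [ha]; rw [abs_of_nonpos] <;> nlinarith [le_max_right R 0]) y
      simp [f1, f2]
    · simp [h]


variable {d : ℕ} {K : Set (Fin d → ℝ)}

lemma exists_dominating (hK : IsCompact K)
    {g : ℝ → (Fin d → ℝ) → ℝ} (hg : Continuous fun q : ℝ × (Fin d → ℝ) => g q.1 q.2)
    (h0 : ∀ t, ∀ x ∉ K, g t x = 0) (t₀ : ℝ) :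
    ∃ C : ℝ, 0 ≤ C ∧ (∀ t ∈ Metric.ball t₀ 1, ∀ x, |g t x| ≤ K.indicator (fun _ => C) x) := by
  have hS : IsCompact ((Icc (t₀ - 1) (t₀ + 1)) ×ˢ K) := isCompact_Icc.prod hK
  obtain ⟨C₀, hC₀⟩ := hS.exists_bound_of_continuousOn hg.continuousOn
  refine ⟨max C₀ 0, le_max_right _ _, fun t ht x => ?_⟩
  by_cases hx : x ∈ K
  · rw [indicator_of_mem hx]
    have hmem : (t, x) ∈ (Icc (t₀ - 1) (t₀ + 1)) ×ˢ K := by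
      refine ⟨?_, hx⟩
      rw [Metric.mem_ball, Real.dist_eq] at ht
      constructor <;> [linarith [abs_le.mp ht.le]; linarith [(abs_le.mp ht.le).2]]
    exact le_trans (by simpa using hC₀ _ hmem) (le_max_left _ _)
  · rw [indicator_of_notMem hx, h0 t x hx, abs_zero]

lemma integrable_of_supp (hK : IsCompact K) {g : (Fin d → ℝ) → ℝ} (hg : Continuous g)
    (h0 : ∀ x ∉ K, g x = 0) : Integrable g :=
  hg.integrable_of_hasCompactSupport (HasCompactSupport.intro hK h0)

lemma indicator_integrable (hK : IsCompact K) (C : ℝ) :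
    Integrable (K.indicator (fun _ => C)) := by
  rw [integrable_indicator_iff hK.measurableSet]
  exact integrableOn_const hK.measure_lt_top.ne

lemma continuous_integral_param (hK : IsCompact K)
    {g : ℝ → (Fin d → ℝ) → ℝ} (hg : Continuous fun q : ℝ × (Fin d → ℝ) => g q.1 q.2)
    (h0 : ∀ t, ∀ x ∉ K, g t x = 0) :
    Continuous fun t => ∫ x, g t x := by
  rw [continuous_iff_continuousAt]
  intro t₀
  obtain ⟨C, _, hC⟩ := exists_dominating hK hg h0 t₀
  have hslice : ∀ t, Continuous (g t) := fun t =>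
    hg.comp (continuous_const.prodMk continuous_id)
  apply continuousAt_of_dominated
  · exact Filter.Eventually.of_forall fun t => (hslice t).aestronglyMeasurable
  · filter_upwards [Metric.ball_mem_nhds t₀ one_pos] with t ht
    exact Filter.Eventually.of_forall fun x => by
      simpa [Real.norm_eq_abs] using hC t ht x
  · exact indicator_integrable hK C
  · exact Filter.Eventually.of_forall fun x =>
      (hg.comp (continuous_id.prodMk continuous_const)).continuousAt

lemma hasDerivAt_integral_param (hK : IsCompact K)
    {g : ℝ → (Fin d → ℝ) → ℝ} (hg : ContDiff ℝ (⊤:ℕ∞) fun q : ℝ × (Fin d → ℝ) => g q.1 q.2)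
    (h0 : ∀ t, ∀ x ∉ K, g t x = 0) (t₀ : ℝ) :
    HasDerivAt (fun t => ∫ x, g t x) (∫ x, deriv (fun s => g s x) t₀) t₀ := by
  set G : ℝ × (Fin d → ℝ) → ℝ := fun q => g q.1 q.2 with hG
  have hGd : Differentiable ℝ G := hg.differentiable (by simp)
  have hder : ∀ t x, HasDerivAt (fun s => g s x) (fderiv ℝ G (t, x) (1, 0)) t := by
    intro t x
    have h1 : HasFDerivAt (fun s : ℝ => (s, x)) (ContinuousLinearMap.inl ℝ ℝ (Fin d → ℝ)) t :=
      hasFDerivAt_prodMk_left t x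
    have h2 := (hGd (t, x)).hasFDerivAt.comp t h1
    have := h2.hasDerivAt
    simpa [Function.comp_def] using this
  have hF' : Continuous fun q : ℝ × (Fin d → ℝ) => fderiv ℝ G q (1, 0) :=
    ((hg.fderiv_right (m := (⊤:ℕ∞)) (by exact_mod_cast le_top)).continuous).clm_apply
      continuous_const
  have h0' : ∀ t, ∀ x ∉ K, fderiv ℝ G (t, x) (1, 0) = 0 := by
    intro t x hx
    have hev : G =ᶠ[nhds (t, x)] (fun _ => (0:ℝ)) := by
      have : (univ ×ˢ Kᶜ : Set (ℝ × (Fin d → ℝ))) ∈ nhds (t, x) :=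
        (isOpen_univ.prod hK.isClosed.isOpen_compl).mem_nhds ⟨trivial, hx⟩
      filter_upwards [this] with q hq using h0 q.1 q.2 hq.2
    rw [hev.fderiv_eq, fderiv_fun_const]; rfl
  obtain ⟨C, _, hC⟩ := exists_dominating hK hF' h0' t₀
  have hslice : ∀ t, Continuous (g t) := fun t =>
    hg.continuous.comp (continuous_const.prodMk continuous_id)
  have key := hasDerivAt_integral_of_dominated_loc_of_deriv_le (Metric.ball_mem_nhds t₀ one_pos)
    (F := fun t x => g t x) (F' := fun t x => fderiv ℝ G (t, x) (1, 0))
    (bound := K.indicator fun _ => C) (μ := volume) (x₀ := t₀)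
    (Filter.Eventually.of_forall fun t => (hslice t).aestronglyMeasurable)
    (integrable_of_supp hK (hslice t₀) (h0 t₀))
    ((hF'.comp ((continuous_const (y := t₀)).prodMk continuous_id)).aestronglyMeasurable)
    (Filter.Eventually.of_forall fun x => fun t ht => by
      simpa [Real.norm_eq_abs] using hC t ht x)
    (indicator_integrable hK C)
    (Filter.Eventually.of_forall fun x => fun t _ => hder t x)
  have heq : ∀ x, deriv (fun s => g s x) t₀ = fderiv ℝ G (t₀, x) (1, 0) := fun x =>
    (hder t₀ x).deriv
  rw [show (fun t => ∫ x, g t x) = fun t => ∫ x, g t x from rfl]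
  simp_rw [heq]
  exact key.2


variable {d : ℕ} {φ : ℝ → (Fin d → ℝ) → ℝ}

lemma slice_contDiff (hφ : ContDiff ℝ (⊤:ℕ∞) fun q : ℝ × (Fin d → ℝ) => φ q.1 q.2) (t : ℝ) :
    ContDiff ℝ (⊤:ℕ∞) (φ t) :=
  hφ.comp (contDiff_const.prodMk contDiff_id)

lemma fderiv_slice (hφ : ContDiff ℝ (⊤:ℕ∞) fun q : ℝ × (Fin d → ℝ) => φ q.1 q.2)
    (t : ℝ) (x : Fin d → ℝ) (w : Fin d → ℝ) :
    fderiv ℝ (φ t) x w = fderiv ℝ (fun q : ℝ × (Fin d → ℝ) => φ q.1 q.2) (t, x) (0, w) := by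
  have h1 : HasFDerivAt (fun y : Fin d → ℝ => (t, y))
      (ContinuousLinearMap.inr ℝ ℝ (Fin d → ℝ)) x := hasFDerivAt_prodMk_right t x
  have h2 := ((hφ.differentiable (by simp)) (t, x)).hasFDerivAt.comp x h1
  have h2' : HasFDerivAt (φ t)
      ((fderiv ℝ (fun q : ℝ × (Fin d → ℝ) => φ q.1 q.2) (t, x)).comp
        (ContinuousLinearMap.inr ℝ ℝ (Fin d → ℝ))) x := h2
  rw [h2'.fderiv]; rfl

lemma hasDerivAt_time (hφ : ContDiff ℝ (⊤:ℕ∞) fun q : ℝ × (Fin d → ℝ) => φ q.1 q.2)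
    (t : ℝ) (x : Fin d → ℝ) :
    HasDerivAt (fun s => φ s x)
      (fderiv ℝ (fun q : ℝ × (Fin d → ℝ) => φ q.1 q.2) (t, x) (1, 0)) t := by
  have h1 : HasFDerivAt (fun s : ℝ => (s, x))
      (ContinuousLinearMap.inl ℝ ℝ (Fin d → ℝ)) t := hasFDerivAt_prodMk_left t x
  have h2 := ((hφ.differentiable (by simp)) (t, x)).hasFDerivAt.comp t h1
  simpa [Function.comp_def] using h2.hasDerivAt

lemma deriv_time (hφ : ContDiff ℝ (⊤:ℕ∞) fun q : ℝ × (Fin d → ℝ) => φ q.1 q.2)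
    (t : ℝ) (x : Fin d → ℝ) :
    deriv (fun s => φ s x) t
      = fderiv ℝ (fun q : ℝ × (Fin d → ℝ) => φ q.1 q.2) (t, x) (1, 0) :=
  (hasDerivAt_time hφ t x).deriv

lemma joint_fderiv_contDiff (hφ : ContDiff ℝ (⊤:ℕ∞) fun q : ℝ × (Fin d → ℝ) => φ q.1 q.2)
    (u : ℝ × (Fin d → ℝ)) :
    ContDiff ℝ (⊤:ℕ∞) fun q : ℝ × (Fin d → ℝ) =>
      fderiv ℝ (fun q : ℝ × (Fin d → ℝ) => φ q.1 q.2) q u :=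
  ((hφ.fderiv_right (m := (⊤:ℕ∞)) (by exact_mod_cast le_top)).clm_apply contDiff_const)

/-- Clairaut/Schwarz: the time derivative of a spatial derivative equals the spatial
derivative of the time derivative. -/
lemma schwarz_hasDerivAt (hφ : ContDiff ℝ (⊤:ℕ∞) fun q : ℝ × (Fin d → ℝ) => φ q.1 q.2)
    (t : ℝ) (x : Fin d → ℝ) (w : Fin d → ℝ) :
    HasDerivAt (fun s => fderiv ℝ (φ s) x w)
      (fderiv ℝ (fun y => deriv (fun s => φ s y) t) x w) t := by
  set Φ : ℝ × (Fin d → ℝ) → ℝ := fun q => φ q.1 q.2 with hΦ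
  set D : ℝ × (Fin d → ℝ) → (ℝ × (Fin d → ℝ)) →L[ℝ] ℝ := fderiv ℝ Φ with hD
  have hΦdiff : Differentiable ℝ Φ := hφ.differentiable (by simp)
  have hDdiff : Differentiable ℝ D :=
    (hφ.fderiv_right (m := (⊤:ℕ∞)) (by exact_mod_cast le_top)).differentiable
      (by simp)
  set D2 := fderiv ℝ D (t, x) with hD2
  have hsymm : ∀ a b, D2 a b = D2 b a :=
    second_derivative_symmetric (fun y => (hΦdiff y).hasFDerivAt) (hDdiff (t, x)).hasFDerivAt
  -- LHS
  have hL : HasDerivAt (fun s => fderiv ℝ (φ s) x w) (D2 (1, 0) (0, w)) t := by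
    have h1 : HasFDerivAt (fun q : ℝ × (Fin d → ℝ) => D q (0, w))
        ((ContinuousLinearMap.apply ℝ ℝ ((0 : ℝ × (Fin d → ℝ)) + (0, w))).comp
          (fderiv ℝ D (t, x))) (t, x) := by
      exact ((hDdiff (t, x)).hasFDerivAt.clm_apply (hasFDerivAt_const (0, w) (t, x))).congr_fderiv
        (ContinuousLinearMap.ext fun y => by simp)
    have h2 : HasFDerivAt (fun s : ℝ => (s, x))
        (ContinuousLinearMap.inl ℝ ℝ (Fin d → ℝ)) t := hasFDerivAt_prodMk_left t x
    have h3 := (h1.comp t h2).hasDerivAt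
    have h3' : HasDerivAt (fun s : ℝ => D (s, x) (0, w))
        (((((ContinuousLinearMap.apply ℝ ℝ) ((0 : ℝ × (Fin d → ℝ)) + (0, w))).comp
          (fderiv ℝ D (t, x))).comp (ContinuousLinearMap.inl ℝ ℝ (Fin d → ℝ))) 1) t := h3
    have h4 : (fun s : ℝ => D (s, x) (0, w)) = fun s => fderiv ℝ (φ s) x w := by
      funext s; rw [fderiv_slice hφ s x w]
    rw [h4] at h3'
    simpa using h3'
  -- RHS
  have hR : HasFDerivAt (fun y => deriv (fun s => φ s y) t)
      ((ContinuousLinearMap.apply ℝ ℝ ((0 : ℝ × (Fin d → ℝ)) + (1, 0))).comp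
        ((fderiv ℝ D (t, x)).comp (ContinuousLinearMap.inr ℝ ℝ (Fin d → ℝ)))) x := by
    have h1 : HasFDerivAt (fun q : ℝ × (Fin d → ℝ) => D q (1, 0))
        ((ContinuousLinearMap.apply ℝ ℝ ((0 : ℝ × (Fin d → ℝ)) + (1, 0))).comp
          (fderiv ℝ D (t, x))) (t, x) := by
      exact ((hDdiff (t, x)).hasFDerivAt.clm_apply (hasFDerivAt_const (1, 0) (t, x))).congr_fderiv
        (ContinuousLinearMap.ext fun y => by simp)
    have h2 : HasFDerivAt (fun y : Fin d → ℝ => (t, y))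
        (ContinuousLinearMap.inr ℝ ℝ (Fin d → ℝ)) x := hasFDerivAt_prodMk_right t x
    have h3 := h1.comp x h2
    have h3' : HasFDerivAt (fun y : Fin d → ℝ => D (t, y) (1, 0))
        ((((ContinuousLinearMap.apply ℝ ℝ) ((0 : ℝ × (Fin d → ℝ)) + (1, 0))).comp
          (fderiv ℝ D (t, x))).comp (ContinuousLinearMap.inr ℝ ℝ (Fin d → ℝ))) x := h3
    have h4 : (fun y : Fin d → ℝ => D (t, y) (1, 0))
        = fun y => deriv (fun s => φ s y) t := by
      funext y; rw [deriv_time hφ t y]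
    rw [h4] at h3'
    have h5 : ((ContinuousLinearMap.apply ℝ ℝ ((0 : ℝ × (Fin d → ℝ)) + (1, 0))).comp
          (fderiv ℝ D (t, x))).comp (ContinuousLinearMap.inr ℝ ℝ (Fin d → ℝ))
        = (ContinuousLinearMap.apply ℝ ℝ ((0 : ℝ × (Fin d → ℝ)) + (1, 0))).comp
          ((fderiv ℝ D (t, x)).comp (ContinuousLinearMap.inr ℝ ℝ (Fin d → ℝ))) := by
      ext y; rfl
    rw [h5] at h3'
    exact h3'
  have hval : fderiv ℝ (fun y => deriv (fun s => φ s y) t) x w = D2 (1, 0) (0, w) := by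
    rw [hR.fderiv]
    simpa using hsymm (0, w) (1, 0)
  rw [hval]
  exact hL


section Helpers
variable {d : ℕ} {x : Fin d → ℝ}

lemma fd_mul {f g : (Fin d → ℝ) → ℝ} (hf : DifferentiableAt ℝ f x)
    (hg : DifferentiableAt ℝ g x) (w : Fin d → ℝ) :
    fderiv ℝ (fun y => f y * g y) x w = fderiv ℝ f x w * g x + f x * fderiv ℝ g x w := by
  have := (hf.hasFDerivAt.fun_mul hg.hasFDerivAt).fderiv
  rw [this]
  simp only [ContinuousLinearMap.add_apply, ContinuousLinearMap.smul_apply, smul_eq_mul]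
  ring

lemma fd_comp {F : ℝ → ℝ} (hF : ContDiff ℝ (⊤:ℕ∞) F) {f : (Fin d → ℝ) → ℝ}
    (hf : DifferentiableAt ℝ f x) (w : Fin d → ℝ) :
    fderiv ℝ (fun y => F (f y)) x w = deriv F (f x) * fderiv ℝ f x w := by
  have h1 : HasDerivAt F (deriv F (f x)) (f x) :=
    ((hF.differentiable (by simp)) (f x)).hasDerivAt
  have h2 := (h1.comp_hasFDerivAt x hf.hasFDerivAt)
  have h2' : HasFDerivAt (fun y => F (f y)) (deriv F (f x) • fderiv ℝ f x) x := h2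
  rw [h2'.fderiv]
  simp

lemma jac_apply {v : (Fin d → ℝ) → Fin d → ℝ}
    (hv : ∀ i, DifferentiableAt ℝ (fun y => v y i) x) (i k : Fin d) :
    jac v x i k = fderiv ℝ (fun y => v y i) x (Pi.single k 1) := by
  have : fderiv ℝ v x = ContinuousLinearMap.pi fun i => fderiv ℝ (fun y => v y i) x := by
    have := fderiv_pi (𝕜 := ℝ) (φ := fun i (y : Fin d → ℝ) => v y i) (x := x) hv
    exact this
  simp [jac, this]

lemma fd_add {f g : (Fin d → ℝ) → ℝ} (hf : DifferentiableAt ℝ f x)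
    (hg : DifferentiableAt ℝ g x) (w : Fin d → ℝ) :
    fderiv ℝ (fun y => f y + g y) x w = fderiv ℝ f x w + fderiv ℝ g x w := by
  rw [(hf.hasFDerivAt.fun_add hg.hasFDerivAt).fderiv]; rfl

lemma fd_sub {f g : (Fin d → ℝ) → ℝ} (hf : DifferentiableAt ℝ f x)
    (hg : DifferentiableAt ℝ g x) (w : Fin d → ℝ) :
    fderiv ℝ (fun y => f y - g y) x w = fderiv ℝ f x w - fderiv ℝ g x w := by
  rw [(hf.hasFDerivAt.fun_sub hg.hasFDerivAt).fderiv]; rfl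

lemma fd_sum {ι : Type*} (s : Finset ι) {f : ι → (Fin d → ℝ) → ℝ}
    (hf : ∀ i ∈ s, DifferentiableAt ℝ (f i) x) (w : Fin d → ℝ) :
    fderiv ℝ (fun y => ∑ i ∈ s, f i y) x w = ∑ i ∈ s, fderiv ℝ (f i) x w := by
  rw [fderiv_fun_sum hf]; simp [ContinuousLinearMap.sum_apply]

lemma fd_const_mul {f : (Fin d → ℝ) → ℝ} (hf : DifferentiableAt ℝ f x) (c : ℝ)
    (w : Fin d → ℝ) :
    fderiv ℝ (fun y => c * f y) x w = c * fderiv ℝ f x w := by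
  rw [fderiv_const_mul hf]; simp

lemma fd_div_const {f : (Fin d → ℝ) → ℝ} (hf : DifferentiableAt ℝ f x) (c : ℝ)
    (w : Fin d → ℝ) :
    fderiv ℝ (fun y => f y / c) x w = fderiv ℝ f x w / c := by
  have h : (fun y => f y / c) = fun y => c⁻¹ * f y := by
    funext y; rw [div_eq_inv_mul]
  rw [h, fd_const_mul hf c⁻¹ w, inv_mul_eq_div]

lemma fd_chain {F : ℝ → ℝ} {c : ℝ} {f : (Fin d → ℝ) → ℝ} (hF : HasDerivAt F c (f x))
    (hf : DifferentiableAt ℝ f x) (w : Fin d → ℝ) :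
    fderiv ℝ (fun y => F (f y)) x w = c * fderiv ℝ f x w := by
  have h2 := hF.comp_hasFDerivAt x hf.hasFDerivAt
  have h2' : HasFDerivAt (fun y => F (f y)) (c • fderiv ℝ f x) x := h2
  rw [h2'.fderiv]; simp

end Helpers

private lemma sum_swap_pair {d : ℕ} (f g : Fin d → Fin d → ℝ)
    (hfg : ∀ i k, f i k + f k i = g i k + g k i) :
    ∑ i, ∑ k, f i k = ∑ i, ∑ k, g i k := by
  have h2 : ∑ i, ∑ k, (f i k + f k i) = ∑ i, ∑ k, (g i k + g k i) :=
    Finset.sum_congr rfl fun i _ => Finset.sum_congr rfl fun k _ => hfg i k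
  have hf : ∑ i, ∑ k, (f i k + f k i)
      = (∑ i, ∑ k, f i k) + ∑ i, ∑ k, f k i := by
    simp [Finset.sum_add_distrib]
  have hg : ∑ i, ∑ k, (g i k + g k i)
      = (∑ i, ∑ k, g i k) + ∑ i, ∑ k, g k i := by
    simp [Finset.sum_add_distrib]
  have hcf : ∑ i, ∑ k, f k i = ∑ i, ∑ k, f i k := Finset.sum_comm
  have hcg : ∑ i, ∑ k, g k i = ∑ i, ∑ k, g i k := Finset.sum_comm
  rw [hf, hcf, hg, hcg] at h2
  linarith

lemma endgame {d : ℕ} (V Vt A B P C Gt Q : Fin d → ℝ) (J W : Fin d → Fin d → ℝ)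
    (r' ρx ηx Mx μx px φt F'x : ℝ)
    (hmom : ∀ i, ρx * Vt i + (∑ k, (ρx * V k + r' * -(Mx * B k)) * J i k)
      - (∑ k, W i k) + P i = μx * A i)
    (hph : φt + (∑ k, V k * A k) - (∑ k, Q k) = 0)
    (hchem : μx = -(∑ k, C k) + F'x)
    (hdiv : (∑ k, J k k) = 0) :
    (r' * φt * ∑ i, V i * V i + ρx * ∑ i, (Vt i * V i + V i * Vt i)) / 2
      + (∑ k, (Gt k * A k + A k * Gt k)) / 2 + F'x * φt
      + (Mx * ∑ i, B i * B i
        + 2 * ηx * ∑ i, ∑ j, (J i j + J j i) / 2 * ((J i j + J j i) / 2))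
    = ∑ k, ((∑ i, (W i k * V i + 2 * ηx * ((J i k + J k i) / 2) * J i k))
        - (P k * V k + px * J k k)
        - ((∑ i, (J i k * V i + V i * J i k)) / 2 * (ρx * V k - r' * (Mx * B k))
          + (∑ i, V i * V i) / 2 * (r' * A k * V k + ρx * J k k - r' * Q k))
        + (Gt k * A k + φt * C k)
        + (B k * (Mx * B k) + μx * Q k)) := by
  have h1 : ∀ i, ρx * Vt i = μx * A i - (∑ k, (ρx * V k + r' * -(Mx * B k)) * J i k)
      + (∑ k, W i k) - P i := fun i => by linarith [hmom i]
  have hφt : φt = (∑ k, Q k) - ∑ k, V k * A k := by linarith [hph]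
  -- LHS pieces
  have hL1 : ρx * ((∑ i, Vt i * V i) + ∑ i, V i * Vt i) = 2 * ∑ i, V i * (ρx * Vt i) := by
    rw [mul_add, Finset.mul_sum, Finset.mul_sum, Finset.mul_sum, ← Finset.sum_add_distrib]
    exact Finset.sum_congr rfl fun i _ => by ring
  have hsub : ∑ i, V i * (ρx * Vt i)
      = μx * (∑ i, V i * A i)
        - (∑ i, V i * ∑ k, (ρx * V k + r' * -(Mx * B k)) * J i k)
        + (∑ i, V i * ∑ k, W i k) - ∑ i, V i * P i := by
    have e1 : ∑ i, V i * (ρx * Vt i)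
        = ∑ i, (μx * (V i * A i) - V i * (∑ k, (ρx * V k + r' * -(Mx * B k)) * J i k)
          + V i * (∑ k, W i k) - V i * P i) :=
      Finset.sum_congr rfl fun i _ => by rw [h1 i]; ring
    rw [e1]
    simp only [Finset.sum_sub_distrib, Finset.sum_add_distrib, ← Finset.mul_sum]
  have hGA : ((∑ k, Gt k * A k) + ∑ k, A k * Gt k) / 2 = ∑ k, Gt k * A k := by
    rw [add_div, Finset.sum_div, Finset.sum_div, ← Finset.sum_add_distrib]
    exact Finset.sum_congr rfl fun k _ => by ring
  -- RHS pieces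
  have c1 : ∑ k, ∑ i, W i k * V i = ∑ i, V i * ∑ k, W i k := by
    rw [Finset.sum_comm]
    exact Finset.sum_congr rfl fun i _ => by
      rw [Finset.mul_sum]; exact Finset.sum_congr rfl fun k _ => by ring
  have hsym : ∑ k, ∑ i, 2 * ηx * ((J i k + J k i) / 2) * J i k
      = 2 * ηx * ∑ i, ∑ j, (J i j + J j i) / 2 * ((J i j + J j i) / 2) := by
    calc ∑ k, ∑ i, 2 * ηx * ((J i k + J k i) / 2) * J i k
        = ∑ i, ∑ k, 2 * ηx * ((J i k + J k i) / 2) * J i k := Finset.sum_comm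
      _ = ∑ i, ∑ k, 2 * ηx * ((J i k + J k i) / 2 * ((J i k + J k i) / 2)) :=
          sum_swap_pair _ _ (fun i k => by ring)
      _ = 2 * ηx * ∑ i, ∑ j, (J i j + J j i) / 2 * ((J i j + J j i) / 2) := by
          simp only [Finset.mul_sum]
  have c2a : ∀ k, ((∑ i, J i k * V i) + ∑ i, V i * J i k) / 2 = ∑ i, V i * J i k := fun k => by
    rw [add_div, Finset.sum_div, Finset.sum_div, ← Finset.sum_add_distrib]
    exact Finset.sum_congr rfl fun i _ => by ring
  have c2 : ∑ k, ((∑ i, J i k * V i) + ∑ i, V i * J i k) / 2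
        * (ρx * V k - r' * (Mx * B k))
      = ∑ i, V i * ∑ k, (ρx * V k + r' * -(Mx * B k)) * J i k := by
    calc ∑ k, ((∑ i, J i k * V i) + ∑ i, V i * J i k) / 2 * (ρx * V k - r' * (Mx * B k))
        = ∑ k, (∑ i, V i * J i k) * (ρx * V k - r' * (Mx * B k)) :=
          Finset.sum_congr rfl fun k _ => by rw [c2a k]
      _ = ∑ k, ∑ i, V i * J i k * (ρx * V k - r' * (Mx * B k)) :=
          Finset.sum_congr rfl fun k _ => Finset.sum_mul _ _ _
      _ = ∑ i, ∑ k, V i * J i k * (ρx * V k - r' * (Mx * B k)) := Finset.sum_comm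
      _ = ∑ i, V i * ∑ k, (ρx * V k + r' * -(Mx * B k)) * J i k := by
          exact Finset.sum_congr rfl fun i _ => by
            rw [Finset.mul_sum]; exact Finset.sum_congr rfl fun k _ => by ring
  have c3 : ∑ k, (∑ i, V i * V i) / 2 * (r' * A k * V k + ρx * J k k - r' * Q k)
      = (∑ i, V i * V i) / 2
        * (r' * (∑ k, V k * A k) + ρx * (∑ k, J k k) - r' * ∑ k, Q k) := by
    rw [← Finset.mul_sum]
    congr 1
    simp only [Finset.sum_sub_distrib, Finset.sum_add_distrib]
    rw [← Finset.mul_sum, ← Finset.mul_sum]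
    congr 2
    · rw [Finset.mul_sum]
      exact Finset.sum_congr rfl fun k _ => by ring
  have c4 : ∑ k, φt * C k = φt * ∑ k, C k := (Finset.mul_sum _ _ _).symm
  have c5 : ∑ k, μx * Q k = μx * ∑ k, Q k := (Finset.mul_sum _ _ _).symm
  have c6 : ∑ k, B k * (Mx * B k) = Mx * ∑ k, B k * B k := by
    rw [Finset.mul_sum]
    exact Finset.sum_congr rfl fun k _ => by ring
  have c7 : ∑ k, px * J k k = px * ∑ k, J k k := (Finset.mul_sum _ _ _).symm
  have c9 : ∑ k, P k * V k = ∑ i, V i * P i :=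
    Finset.sum_congr rfl fun k _ => by ring
  -- expand the RHS
  simp only [Finset.sum_add_distrib, Finset.sum_sub_distrib]
  rw [c1, hsym, c2, c3, c4, c5, c6, c7, c9, hGA, hL1, hsub, hφt, hchem, hdiv]
  ring

/-- Energy identity for the diffuse-interface two-phase flow model of
Abels–Garcke–Grün (equation (2.1) in the paper). -/
theorem energy_identity
    {d : ℕ} (hd : 1 ≤ d) {T : ℝ} (hT : 0 < T)
    {ρ₁ ρ₂ : ℝ} (hρ₁ : 0 < ρ₁) (hρ₂ : 0 < ρ₂)
    (M η F : ℝ → ℝ)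
    (hM : ContDiff ℝ (⊤ : ℕ∞) M) (hη : ContDiff ℝ (⊤ : ℕ∞) η)
    (hF : ContDiff ℝ (⊤ : ℕ∞) F)
    (hMnn : ∀ s, 0 ≤ M s) (hηpos : ∀ s, 0 < η s)
    (hF0 : F 0 = 0) (hF'0 : deriv F 0 = 0)
    (v : ℝ → (Fin d → ℝ) → Fin d → ℝ) (p φ μ : ℝ → (Fin d → ℝ) → ℝ)
    (hv : ContDiff ℝ (⊤ : ℕ∞) fun q : ℝ × (Fin d → ℝ) => v q.1 q.2)
    (hp : ContDiff ℝ (⊤ : ℕ∞) fun q : ℝ × (Fin d → ℝ) => p q.1 q.2)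
    (hφ : ContDiff ℝ (⊤ : ℕ∞) fun q : ℝ × (Fin d → ℝ) => φ q.1 q.2)
    (hμ : ContDiff ℝ (⊤ : ℕ∞) fun q : ℝ × (Fin d → ℝ) => μ q.1 q.2)
    {K : Set (Fin d → ℝ)} (hK : IsCompact K)
    (hsupp : ∀ t, ∀ x ∉ K, v t x = 0 ∧ p t x = 0 ∧ φ t x = 0 ∧ μ t x = 0)
    -- momentum equation: ρ(φ)∂ₜv + ((ρ(φ)v + ρ′ j)·∇)v − div(2η(φ)Dv) + ∇p = μ∇φ,
    -- where j = −M(φ)∇μ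
    (hmom : ∀ t ∈ Ioo (0:ℝ) T, ∀ x, ∀ i,
      rhoAff ρ₁ ρ₂ (φ t x) * deriv (fun s => v s x i) t
        + (∑ k, (rhoAff ρ₁ ρ₂ (φ t x) * v t x k
            + (ρ₂ - ρ₁) / 2 * (-(M (φ t x) * grad (μ t) x k))) * jac (v t) x i k)
        - (∑ k, fderiv ℝ (fun y => 2 * η (φ t y) * symGrad (v t) y i k) x (Pi.single k 1))
        + grad (p t) x i
      = μ t x * grad (φ t) x i)
    -- phase-field equation: ∂ₜφ + ⟨v,∇φ⟩ − div(M(φ)∇μ) = 0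
    (hph : ∀ t ∈ Ioo (0:ℝ) T, ∀ x,
      deriv (fun s => φ s x) t + dot (v t x) (grad (φ t) x)
        - (∑ k, fderiv ℝ (fun y => M (φ t y) * grad (μ t) y k) x (Pi.single k 1)) = 0)
    -- chemical potential: μ = −Δφ + F′(φ)
    (hchem : ∀ t ∈ Ioo (0:ℝ) T, ∀ x, μ t x = - lap (φ t) x + deriv F (φ t x))
    -- incompressibility: div v = 0
    (hdiv : ∀ t ∈ Ioo (0:ℝ) T, ∀ x, divg (v t) x = 0) :
    (1/2) * (∫ x, rhoAff ρ₁ ρ₂ (φ T x) * dot (v T x) (v T x))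
      + (1/2) * (∫ x, dot (grad (φ T) x) (grad (φ T) x))
      + (∫ x, F (φ T x))
      + (∫ t in (0:ℝ)..T, ∫ x, M (φ t x) * dot (grad (μ t) x) (grad (μ t) x))
      + (∫ t in (0:ℝ)..T, ∫ x, 2 * η (φ t x) * frob (symGrad (v t) x) (symGrad (v t) x))
    = (1/2) * (∫ x, rhoAff ρ₁ ρ₂ (φ 0 x) * dot (v 0 x) (v 0 x))
      + (1/2) * (∫ x, dot (grad (φ 0) x) (grad (φ 0) x))
      + (∫ x, F (φ 0 x)) := by
  classical
  -- abbreviations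
  set r' : ℝ := (ρ₂ - ρ₁) / 2 with hr'
  -- component-wise joint smoothness of v
  have hvi : ∀ i, ContDiff ℝ (⊤:ℕ∞) fun q : ℝ × (Fin d → ℝ) => v q.1 q.2 i :=
    fun i => contDiff_pi.mp hv i
  -- support facts
  have hv0 : ∀ t, ∀ x ∉ K, ∀ i, v t x i = 0 := fun t x hx i => by
    rw [(hsupp t x hx).1]; rfl
  have hφ0 : ∀ t, ∀ x ∉ K, φ t x = 0 := fun t x hx => (hsupp t x hx).2.2.1
  have hμ0 : ∀ t, ∀ x ∉ K, μ t x = 0 := fun t x hx => (hsupp t x hx).2.2.2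
  have hp0 : ∀ t, ∀ x ∉ K, p t x = 0 := fun t x hx => (hsupp t x hx).2.1
  -- fderiv of a field vanishing off K vanishes off K
  have hfd0 : ∀ (g : (Fin d → ℝ) → ℝ), (∀ y ∉ K, g y = 0) → ∀ x ∉ K, fderiv ℝ g x = 0 := by
    intro g hg x hx
    have hev : g =ᶠ[nhds x] (fun _ => (0:ℝ)) := by
      filter_upwards [hK.isClosed.isOpen_compl.mem_nhds hx] with y hy using hg y hy
    rw [hev.fderiv_eq, fderiv_fun_const]; rfl
  -- joint smoothness of spatial gradients
  have hgφ : ∀ w, ContDiff ℝ (⊤:ℕ∞) fun q : ℝ × (Fin d → ℝ) => fderiv ℝ (φ q.1) q.2 w := by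
    intro w
    have : (fun q : ℝ × (Fin d → ℝ) => fderiv ℝ (φ q.1) q.2 w)
        = fun q => fderiv ℝ (fun q' : ℝ × (Fin d → ℝ) => φ q'.1 q'.2) q (0, w) := by
      funext q; exact fderiv_slice hφ q.1 q.2 w
    rw [this]; exact joint_fderiv_contDiff hφ (0, w)
  have hgμ : ∀ w, ContDiff ℝ (⊤:ℕ∞) fun q : ℝ × (Fin d → ℝ) => fderiv ℝ (μ q.1) q.2 w := by
    intro w
    have : (fun q : ℝ × (Fin d → ℝ) => fderiv ℝ (μ q.1) q.2 w)
        = fun q => fderiv ℝ (fun q' : ℝ × (Fin d → ℝ) => μ q'.1 q'.2) q (0, w) := by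
      funext q; exact fderiv_slice hμ q.1 q.2 w
    rw [this]; exact joint_fderiv_contDiff hμ (0, w)
  have hgv : ∀ i w, ContDiff ℝ (⊤:ℕ∞)
      fun q : ℝ × (Fin d → ℝ) => fderiv ℝ (fun y => v q.1 y i) q.2 w := by
    intro i w
    have : (fun q : ℝ × (Fin d → ℝ) => fderiv ℝ (fun y => v q.1 y i) q.2 w)
        = fun q => fderiv ℝ (fun q' : ℝ × (Fin d → ℝ) => v q'.1 q'.2 i) q (0, w) := by
      funext q; exact fderiv_slice (φ := fun s y => v s y i) (hvi i) q.1 q.2 w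
    rw [this]; exact joint_fderiv_contDiff (φ := fun s y => v s y i) (hvi i) (0, w)
  have hgφt : ContDiff ℝ (⊤:ℕ∞) fun q : ℝ × (Fin d → ℝ) => deriv (fun s => φ s q.2) q.1 := by
    have : (fun q : ℝ × (Fin d → ℝ) => deriv (fun s => φ s q.2) q.1)
        = fun q => fderiv ℝ (fun q' : ℝ × (Fin d → ℝ) => φ q'.1 q'.2) q (1, 0) := by
      funext q; exact deriv_time hφ q.1 q.2
    rw [this]; exact joint_fderiv_contDiff hφ (1, 0)
  -- slice differentiability of v components (for jac rewriting)
  have hvti : ∀ t i, ContDiff ℝ (⊤:ℕ∞) fun y => v t y i := fun t i => slice_contDiff (φ := fun s y => v s y i) (hvi i) t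
  have hvtdiff : ∀ t x, ∀ i, DifferentiableAt ℝ (fun y => v t y i) x := fun t x i =>
    ((hvti t i).differentiable (by simp)) x
  -- jac and symGrad as component derivatives
  have hjac : ∀ t x i k, jac (v t) x i k = fderiv ℝ (fun y => v t y i) x (Pi.single k 1) :=
    fun t x i k => jac_apply (hvtdiff t x) i k
  have hsymJ : ∀ i k, ContDiff ℝ (⊤:ℕ∞)
      fun q : ℝ × (Fin d → ℝ) => symGrad (v q.1) q.2 i k := by
    intro i k
    have : (fun q : ℝ × (Fin d → ℝ) => symGrad (v q.1) q.2 i k)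
        = fun q => (fderiv ℝ (fun y => v q.1 y i) q.2 (Pi.single k 1)
            + fderiv ℝ (fun y => v q.1 y k) q.2 (Pi.single i 1)) / 2 := by
      funext q; simp only [symGrad, Matrix.of_apply, hjac]
    rw [this]
    exact ((hgv i (Pi.single k 1)).add (hgv k (Pi.single i 1))).div_const 2
  -- energy density and dissipation density
  set e : ℝ → (Fin d → ℝ) → ℝ := fun s y =>
    rhoAff ρ₁ ρ₂ (φ s y) * dot (v s y) (v s y) / 2
      + dot (grad (φ s) y) (grad (φ s) y) / 2 + F (φ s y) with he_def
  set dis : ℝ → (Fin d → ℝ) → ℝ := fun s y =>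
    M (φ s y) * dot (grad (μ s) y) (grad (μ s) y)
      + 2 * η (φ s y) * frob (symGrad (v s) y) (symGrad (v s) y) with hdis_def
  set G : Fin d → ℝ → (Fin d → ℝ) → ℝ := fun k s y =>
    (∑ i, 2 * η (φ s y) * symGrad (v s) y i k * v s y i) - p s y * v s y k
      - dot (v s y) (v s y) / 2 *
          (rhoAff ρ₁ ρ₂ (φ s y) * v s y k - r' * (M (φ s y) * grad (μ s) y k))
      + deriv (fun s' => φ s' y) s * grad (φ s) y k
      + μ s y * (M (φ s y) * grad (μ s) y k) with hG_def
  -- joint smoothness of e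
  have he_joint : ContDiff ℝ (⊤:ℕ∞) fun q : ℝ × (Fin d → ℝ) => e q.1 q.2 := by
    simp only [he_def]
    simp only [rhoAff, dot, grad]
    apply ContDiff.add
    apply ContDiff.add
    · exact (((contDiff_const.add (contDiff_const.mul hφ)).mul
        (ContDiff.sum fun i _ => (hvi i).mul (hvi i))).div_const 2)
    · exact (ContDiff.sum fun k _ =>
        (hgφ (Pi.single k 1)).mul (hgφ (Pi.single k 1))).div_const 2
    · exact hF.comp hφ
  -- joint smoothness of dis
  have hdis_joint : ContDiff ℝ (⊤:ℕ∞) fun q : ℝ × (Fin d → ℝ) => dis q.1 q.2 := by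
    simp only [hdis_def]
    simp only [dot, grad, frob]
    apply ContDiff.add
    · exact (hM.comp hφ).mul
        (ContDiff.sum fun k _ => (hgμ (Pi.single k 1)).mul (hgμ (Pi.single k 1)))
    · exact (contDiff_const.mul (hη.comp hφ)).mul
        (ContDiff.sum fun i _ => ContDiff.sum fun k _ => (hsymJ i k).mul (hsymJ i k))
  -- joint smoothness of G k
  have hG_joint : ∀ k, ContDiff ℝ (⊤:ℕ∞) fun q : ℝ × (Fin d → ℝ) => G k q.1 q.2 := by
    intro k
    simp only [hG_def]
    simp only [rhoAff, dot, grad]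
    apply ContDiff.add
    apply ContDiff.add
    apply ContDiff.sub
    apply ContDiff.sub
    · exact ContDiff.sum fun i _ =>
        ((contDiff_const.mul (hη.comp hφ)).mul (hsymJ i k)).mul (hvi i)
    · exact hp.mul (hvi k)
    · exact ((ContDiff.sum fun i _ => (hvi i).mul (hvi i)).div_const 2).mul
        (((contDiff_const.add (contDiff_const.mul hφ)).mul (hvi k)).sub
          (contDiff_const.mul ((hM.comp hφ).mul (hgμ (Pi.single k 1)))))
    · exact hgφt.mul (hgφ (Pi.single k 1))
    · exact hμ.mul ((hM.comp hφ).mul (hgμ (Pi.single k 1)))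
  -- support of grad slices
  have hgrad0 : ∀ (g : ℝ → (Fin d → ℝ) → ℝ), (∀ t, ∀ x ∉ K, g t x = 0) →
      ∀ t, ∀ x ∉ K, ∀ w, fderiv ℝ (g t) x w = 0 := by
    intro g hg t x hx w
    rw [hfd0 (g t) (hg t) x hx]; rfl
  -- support of e, dis, G
  have he0 : ∀ t, ∀ x ∉ K, e t x = 0 := by
    intro t x hx
    simp only [he_def]
    simp only [hφ0 t x hx, (hsupp t x hx).1, hF0]
    have h1 : dot (0 : Fin d → ℝ) 0 = 0 := by simp [dot]
    have h2 : dot (grad (φ t) x) (grad (φ t) x) = 0 := by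
      simp only [dot, grad]
      apply Finset.sum_eq_zero; intro k _
      rw [hgrad0 φ hφ0 t x hx]; ring
    rw [h1, h2]; ring
  have hdis0 : ∀ t, ∀ x ∉ K, dis t x = 0 := by
    intro t x hx
    simp only [hdis_def]
    have h2 : dot (grad (μ t) x) (grad (μ t) x) = 0 := by
      simp only [dot, grad]
      apply Finset.sum_eq_zero; intro k _
      rw [hgrad0 μ hμ0 t x hx]; ring
    have h3 : frob (symGrad (v t) x) (symGrad (v t) x) = 0 := by
      simp only [frob]
      apply Finset.sum_eq_zero; intro i _
      apply Finset.sum_eq_zero; intro k _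
      have hsik : symGrad (v t) x i k = 0 := by
        simp only [symGrad, Matrix.of_apply, hjac]
        rw [hfd0 (fun y => v t y i) (fun y hy => hv0 t y hy i) x hx,
          hfd0 (fun y => v t y k) (fun y hy => hv0 t y hy k) x hx]
        simp
      rw [hsik]; ring
    rw [h2, h3]; ring
  have hG0 : ∀ k t, ∀ x ∉ K, G k t x = 0 := by
    intro k t x hx
    simp only [hG_def]
    have hφt0 : deriv (fun s' => φ s' x) t = 0 := by
      have : (fun s' => φ s' x) = fun _ => 0 := funext fun s => hφ0 s x hx
      rw [this]; simp
    have hvx : ∀ i, v t x i = 0 := hv0 t x hx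
    have hdot0 : dot (v t x) (v t x) = 0 := by
      simp only [dot]; apply Finset.sum_eq_zero; intro i _; rw [hvx i]; ring
    simp only [hvx, hp0 t x hx, hμ0 t x hx, hdot0, hφt0, mul_zero, zero_mul,
      Finset.sum_const_zero, zero_div, zero_add, add_zero, sub_zero, zero_sub, neg_zero]
  -- slice versions
  have hG_slice : ∀ k t, ContDiff ℝ (⊤:ℕ∞) (G k t) := fun k t => slice_contDiff (hG_joint k) t
  -- THE MAIN POINTWISE IDENTITY
  have hpt : ∀ t ∈ Ioo (0:ℝ) T, ∀ x,
      deriv (fun s => e s x) t + dis t x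
        = ∑ k, fderiv ℝ (G k t) x (Pi.single k 1) := by
    intro t ht x
    have Hmom := fun i => hmom t ht x i
    have Hph := hph t ht x
    have Hchem := hchem t ht x
    have Hdiv := hdiv t ht x
    have hpi : ∀ (y w : Fin d → ℝ) (i : Fin d),
        fderiv ℝ (v t) y w i = fderiv ℝ (fun z => v t z i) y w := by
      intro y w i
      rw [show (v t) = (fun z j => v t z j) from rfl,
        fderiv_pi (fun j => hvtdiff t y j)]
      rfl
    simp only [he_def, hdis_def, hG_def, dot, frob, grad, lap, divg, symGrad,
      Matrix.of_apply, jac, hpi] at Hmom Hph Hchem Hdiv ⊢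
    -- differentiability bundle at x
    have DD : ∀ {g : (Fin d → ℝ) → ℝ}, ContDiff ℝ (⊤:ℕ∞) g → DifferentiableAt ℝ g x :=
      fun hg => hg.differentiable (by simp) x
    have cφ : ContDiff ℝ (⊤:ℕ∞) (φ t) := slice_contDiff hφ t
    have cμ : ContDiff ℝ (⊤:ℕ∞) (μ t) := slice_contDiff hμ t
    have cp : ContDiff ℝ (⊤:ℕ∞) (p t) := slice_contDiff hp t
    have cvi : ∀ i, ContDiff ℝ (⊤:ℕ∞) (fun y => v t y i) := fun i => hvti t i
    have cgφ : ∀ w, ContDiff ℝ (⊤:ℕ∞) (fun y => fderiv ℝ (φ t) y w) := fun w =>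
      (hgφ w).comp (contDiff_const.prodMk contDiff_id)
    have cgμ : ∀ w, ContDiff ℝ (⊤:ℕ∞) (fun y => fderiv ℝ (μ t) y w) := fun w =>
      (hgμ w).comp (contDiff_const.prodMk contDiff_id)
    have cgv : ∀ i w, ContDiff ℝ (⊤:ℕ∞) (fun y => fderiv ℝ (fun z => v t z i) y w) :=
      fun i w => (hgv i w).comp (contDiff_const.prodMk contDiff_id)
    have cφt : ContDiff ℝ (⊤:ℕ∞) (fun y => deriv (fun s => φ s y) t) :=
      hgφt.comp (contDiff_const.prodMk contDiff_id)
    have crho : ContDiff ℝ (⊤:ℕ∞) (rhoAff ρ₁ ρ₂) := by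
      have h : rhoAff ρ₁ ρ₂ = fun s => (ρ₂ + ρ₁) / 2 + (ρ₂ - ρ₁) / 2 * s := rfl
      rw [h]; exact contDiff_const.add (contDiff_const.mul contDiff_id)
    have crhoφ : ContDiff ℝ (⊤:ℕ∞) (fun y => rhoAff ρ₁ ρ₂ (φ t y)) := crho.comp cφ
    have cMφ : ContDiff ℝ (⊤:ℕ∞) (fun y => M (φ t y)) := hM.comp cφ
    have cηφ : ContDiff ℝ (⊤:ℕ∞) (fun y => η (φ t y)) := hη.comp cφ
    have cf1 : ∀ (i k : Fin d), ContDiff ℝ (⊤:ℕ∞) (fun y =>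
        2 * η (φ t y) * ((fderiv ℝ (fun z => v t z i) y (Pi.single k 1)
          + fderiv ℝ (fun z => v t z k) y (Pi.single i 1)) / 2)) := fun i k =>
      (contDiff_const.mul cηφ).mul
        (((cgv i (Pi.single k 1)).add (cgv k (Pi.single i 1))).div_const 2)
    -- time derivatives as HasDerivAt
    have hφtHD : HasDerivAt (fun s => φ s x) (deriv (fun s => φ s x) t) t := by
      have h := hasDerivAt_time hφ t x
      rwa [← deriv_time hφ t x] at h
    have hvHD : ∀ i, HasDerivAt (fun s => v s x i) (deriv (fun s => v s x i) t) t := by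
      intro i
      have h := hasDerivAt_time (φ := fun s y => v s y i) (hvi i) t x
      rwa [← deriv_time (φ := fun s y => v s y i) (hvi i) t x] at h
    have hrhoHD : ∀ z : ℝ, HasDerivAt (rhoAff ρ₁ ρ₂) r' z := by
      intro z
      have h : HasDerivAt (fun s : ℝ => (ρ₂ + ρ₁) / 2 + (ρ₂ - ρ₁) / 2 * s) ((ρ₂ - ρ₁) / 2) z := by
        simpa using (((hasDerivAt_id z).const_mul ((ρ₂ - ρ₁) / 2)).const_add ((ρ₂ + ρ₁) / 2))
      rw [hr']; exact h
    have hgHD : ∀ k : Fin d, HasDerivAt (fun s => fderiv ℝ (φ s) x (Pi.single k 1))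
        (fderiv ℝ (fun y => deriv (fun s => φ s y) t) x (Pi.single k 1)) t :=
      fun k => schwarz_hasDerivAt hφ t x (Pi.single k 1)
    -- time derivative of the energy density
    have hTE : HasDerivAt (fun s => (rhoAff ρ₁ ρ₂ (φ s x) * ∑ i, v s x i * v s x i) / 2
          + (∑ k, fderiv ℝ (φ s) x (Pi.single k 1) * fderiv ℝ (φ s) x (Pi.single k 1)) / 2
          + F (φ s x))
        ((r' * deriv (fun s => φ s x) t * ∑ i, v t x i * v t x i
            + rhoAff ρ₁ ρ₂ (φ t x) * ∑ i, (deriv (fun s => v s x i) t * v t x i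
              + v t x i * deriv (fun s => v s x i) t)) / 2
          + (∑ k, (fderiv ℝ (fun y => deriv (fun s => φ s y) t) x (Pi.single k 1) * fderiv ℝ (φ t) x (Pi.single k 1) + fderiv ℝ (φ t) x (Pi.single k 1) * fderiv ℝ (fun y => deriv (fun s => φ s y) t) x (Pi.single k 1))) / 2
          + deriv F (φ t x) * deriv (fun s => φ s x) t) t := by
      exact ((((hrhoHD (φ t x)).comp t hφtHD).fun_mul
          (HasDerivAt.fun_sum fun i _ => (hvHD i).fun_mul (hvHD i))).div_const 2).fun_add
        ((HasDerivAt.fun_sum fun k _ => (hgHD k).fun_mul (hgHD k)).div_const 2) |>.fun_add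
        (((hF.differentiable (by simp) (φ t x)).hasDerivAt).comp t hφtHD)
    rw [hTE.deriv]
    -- divergence of the flux, blockwise
    have hdG : ∀ k : Fin d, fderiv ℝ (fun y => ∑ i, 2 * η (φ t y) * ((fderiv ℝ (fun z => v t z i) y (Pi.single k 1) + fderiv ℝ (fun z => v t z k) y (Pi.single i 1)) / 2) * v t y i - p t y * v t y k - (∑ i, v t y i * v t y i) / 2 * (rhoAff ρ₁ ρ₂ (φ t y) * v t y k - r' * (M (φ t y) * fderiv ℝ (μ t) y (Pi.single k 1))) + deriv (fun s' => φ s' y) t * fderiv ℝ (φ t) y (Pi.single k 1) + μ t y * (M (φ t y) * fderiv ℝ (μ t) y (Pi.single k 1))) x (Pi.single k 1) = ∑ i, (fderiv ℝ (fun y => 2 * η (φ t y) * ((fderiv ℝ (fun z => v t z i) y (Pi.single k 1) + fderiv ℝ (fun z => v t z k) y (Pi.single i 1)) / 2)) x (Pi.single k 1) * v t x i + 2 * η (φ t x) * ((fderiv ℝ (fun z => v t z i) x (Pi.single k 1) + fderiv ℝ (fun z => v t z k) x (Pi.single i 1)) / 2) * fderiv ℝ (fun z => v t z i) x (Pi.single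 k 1)) - (fderiv ℝ (p t) x (Pi.single k 1) * v t x k + p t x * fderiv ℝ (fun z => v t z k) x (Pi.single k 1)) - ((∑ i, (fderiv ℝ (fun z => v t z i) x (Pi.single k 1) * v t x i + v t x i * fderiv ℝ (fun z => v t z i) x (Pi.single k 1))) / 2 * (rhoAff ρ₁ ρ₂ (φ t x) * v t x k - r' * (M (φ t x) * fderiv ℝ (μ t) x (Pi.single k 1))) + (∑ i, v t x i * v t x i) / 2 * (r' * fderiv ℝ (φ t) x (Pi.single k 1) * v t x k + rhoAff ρ₁ ρ₂ (φ t x) * fderiv ℝ (fun z => v t z k) x (Pi.single k 1) - r' * fderiv ℝ (fun y => M (φ t y) * fderiv ℝ (μ t) y (Pi.single k 1)) x (Pi.single k 1))) + (fderiv ℝ (fun y => deriv (fun s => φ s y) t) x (Pi.single k 1) * fderiv ℝ (φ t) x (Pi.single k 1) + deriv (fun s => φ s x) t * fderiv ℝ (fun y => fderiv ℝ (φ t) y (Pi.single k 1)) x (Pi.single k 1)) + (fderiv ℝ (μ t) x (Pi.single k 1) * (M (φ t x) * fderiv ℝ (μ t) x (Pi.single k 1)) + μ t x * fderiv ℝ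 (fun y => M (φ t y) * fderiv ℝ (μ t) y (Pi.single k 1)) x (Pi.single k 1)) := by
      intro k
      have d1 : DifferentiableAt ℝ (fun y => ∑ i, 2 * η (φ t y) * ((fderiv ℝ (fun z => v t z i) y (Pi.single k 1) + fderiv ℝ (fun z => v t z k) y (Pi.single i 1)) / 2) * v t y i) x :=
        DD (ContDiff.sum fun i _ => (cf1 i k).mul (cvi i))
      have d2 : DifferentiableAt ℝ (fun y => p t y * v t y k) x := DD (cp.mul (cvi k))
      have cS2s : ContDiff ℝ (⊤:ℕ∞) (fun y => ∑ i, v t y i * v t y i) :=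
        ContDiff.sum fun i _ => (cvi i).mul (cvi i)
      have cg3 : ContDiff ℝ (⊤:ℕ∞) (fun y => rhoAff ρ₁ ρ₂ (φ t y) * v t y k
          - r' * (M (φ t y) * fderiv ℝ (μ t) y (Pi.single k 1))) :=
        (crhoφ.mul (cvi k)).sub (contDiff_const.mul (cMφ.mul (cgμ (Pi.single k 1))))
      have d3 : DifferentiableAt ℝ (fun y => (∑ i, v t y i * v t y i) / 2 * (rhoAff ρ₁ ρ₂ (φ t y) * v t y k - r' * (M (φ t y) * fderiv ℝ (μ t) y (Pi.single k 1)))) x := DD ((cS2s.div_const 2).mul cg3)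
      have d4 : DifferentiableAt ℝ (fun y => deriv (fun s' => φ s' y) t * fderiv ℝ (φ t) y (Pi.single k 1)) x := DD (cφt.mul (cgφ (Pi.single k 1)))
      have d5 : DifferentiableAt ℝ (fun y => μ t y * (M (φ t y) * fderiv ℝ (μ t) y (Pi.single k 1))) x :=
        DD (cμ.mul (cMφ.mul (cgμ (Pi.single k 1))))
      have hb1 : fderiv ℝ (fun y => ∑ i, 2 * η (φ t y) * ((fderiv ℝ (fun z => v t z i) y (Pi.single k 1) + fderiv ℝ (fun z => v t z k) y (Pi.single i 1)) / 2) * v t y i) x (Pi.single k 1) = ∑ i, (fderiv ℝ (fun y => 2 * η (φ t y) * ((fderiv ℝ (fun z => v t z i) y (Pi.single k 1) + fderiv ℝ (fun z => v t z k) y (Pi.single i 1)) / 2)) x (Pi.single k 1) * v t x i + 2 * η (φ t x) * ((fderiv ℝ (fun z => v t z i) x (Pi.single k 1) + fderiv ℝ (fun z => v t z k) x (Pi.single i 1)) / 2) * fderiv ℝ (fun z => v t z i) x (Pi.single k 1)) :=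
        (fd_sum Finset.univ (fun i _ => (DD (cf1 i k)).mul (DD (cvi i)))
            (Pi.single k 1)).trans
          (Finset.sum_congr rfl fun i _ => fd_mul (DD (cf1 i k)) (DD (cvi i)) (Pi.single k 1))
      have hb2 : fderiv ℝ (fun y => p t y * v t y k) x (Pi.single k 1) = (fderiv ℝ (p t) x (Pi.single k 1) * v t x k + p t x * fderiv ℝ (fun z => v t z k) x (Pi.single k 1)) := fd_mul (DD cp) (DD (cvi k)) (Pi.single k 1)
      have hS2sum : fderiv ℝ (fun y => ∑ i, v t y i * v t y i) x (Pi.single k 1)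
          = ∑ i, (fderiv ℝ (fun z => v t z i) x (Pi.single k 1) * v t x i + v t x i * fderiv ℝ (fun z => v t z i) x (Pi.single k 1)) :=
        (fd_sum Finset.univ (fun i _ => (DD (cvi i)).mul (DD (cvi i))) (Pi.single k 1)).trans
          (Finset.sum_congr rfl fun i _ => fd_mul (DD (cvi i)) (DD (cvi i)) (Pi.single k 1))
      have hS2 : fderiv ℝ (fun y => (∑ i, v t y i * v t y i) / 2) x (Pi.single k 1)
          = (∑ i, (fderiv ℝ (fun z => v t z i) x (Pi.single k 1) * v t x i + v t x i * fderiv ℝ (fun z => v t z i) x (Pi.single k 1))) / 2 :=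
        (fd_div_const (DD cS2s) 2 (Pi.single k 1)).trans (congrArg (· / 2) hS2sum)
      have hrho_fd : fderiv ℝ (fun y => rhoAff ρ₁ ρ₂ (φ t y)) x (Pi.single k 1)
          = r' * fderiv ℝ (φ t) x (Pi.single k 1) := fd_chain (hrhoHD (φ t x)) (DD cφ) (Pi.single k 1)
      have hg3a : fderiv ℝ (fun y => rhoAff ρ₁ ρ₂ (φ t y) * v t y k) x (Pi.single k 1)
          = r' * fderiv ℝ (φ t) x (Pi.single k 1) * v t x k + rhoAff ρ₁ ρ₂ (φ t x) * fderiv ℝ (fun z => v t z k) x (Pi.single k 1) :=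
        (fd_mul (DD crhoφ) (DD (cvi k)) (Pi.single k 1)).trans (by rw [hrho_fd])
      have hg3b : fderiv ℝ (fun y => r' * (M (φ t y) * fderiv ℝ (μ t) y (Pi.single k 1))) x (Pi.single k 1)
          = r' * fderiv ℝ (fun y => M (φ t y) * fderiv ℝ (μ t) y (Pi.single k 1)) x (Pi.single k 1) := fd_const_mul (DD (cMφ.mul (cgμ (Pi.single k 1)))) r' (Pi.single k 1)
      have hg3 : fderiv ℝ (fun y => rhoAff ρ₁ ρ₂ (φ t y) * v t y k
            - r' * (M (φ t y) * fderiv ℝ (μ t) y (Pi.single k 1))) x (Pi.single k 1)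
          = r' * fderiv ℝ (φ t) x (Pi.single k 1) * v t x k + rhoAff ρ₁ ρ₂ (φ t x) * fderiv ℝ (fun z => v t z k) x (Pi.single k 1) - r' * fderiv ℝ (fun y => M (φ t y) * fderiv ℝ (μ t) y (Pi.single k 1)) x (Pi.single k 1) :=
        (fd_sub (DD (crhoφ.mul (cvi k)))
            (DD (contDiff_const.mul (cMφ.mul (cgμ (Pi.single k 1))))) (Pi.single k 1)).trans
          (by rw [hg3a, hg3b])
      have hb3 : fderiv ℝ (fun y => (∑ i, v t y i * v t y i) / 2 * (rhoAff ρ₁ ρ₂ (φ t y) * v t y k - r' * (M (φ t y) * fderiv ℝ (μ t) y (Pi.single k 1)))) x (Pi.single k 1) = ((∑ i, (fderiv ℝ (fun z => v t z i) x (Pi.single k 1) * v t x i + v t x i * fderiv ℝ (fun z => v t z i) x (Pi.single k 1))) / 2 * (rhoAff ρ₁ ρ₂ (φ t x) * v t x k - r' * (M (φ t x) * fderiv ℝ (μ t) x (Pi.single k 1))) + (∑ i, v t x i * v t x i) / 2 * (r' * fderiv ℝ (φ t) x (Pi.single k 1) * v t x k + rhoAff ρ₁ ρ₂ (φ t x)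 * fderiv ℝ (fun z => v t z k) x (Pi.single k 1) - r' * fderiv ℝ (fun y => M (φ t y) * fderiv ℝ (μ t) y (Pi.single k 1)) x (Pi.single k 1))) :=
        (fd_mul (DD (cS2s.div_const 2)) (DD cg3) (Pi.single k 1)).trans (by rw [hS2, hg3])
      have hb4 : fderiv ℝ (fun y => deriv (fun s' => φ s' y) t * fderiv ℝ (φ t) y (Pi.single k 1)) x (Pi.single k 1) = (fderiv ℝ (fun y => deriv (fun s => φ s y) t) x (Pi.single k 1) * fderiv ℝ (φ t) x (Pi.single k 1) + deriv (fun s => φ s x) t * fderiv ℝ (fun y => fderiv ℝ (φ t) y (Pi.single k 1)) x (Pi.single k 1)) := fd_mul (DD cφt) (DD (cgφ (Pi.single k 1))) (Pi.single k 1)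
      have hb5 : fderiv ℝ (fun y => μ t y * (M (φ t y) * fderiv ℝ (μ t) y (Pi.single k 1))) x (Pi.single k 1) = (fderiv ℝ (μ t) x (Pi.single k 1) * (M (φ t x) * fderiv ℝ (μ t) x (Pi.single k 1)) + μ t x * fderiv ℝ (fun y => M (φ t y) * fderiv ℝ (μ t) y (Pi.single k 1)) x (Pi.single k 1)) :=
        fd_mul (DD cμ) (DD (cMφ.mul (cgμ (Pi.single k 1)))) (Pi.single k 1)
      calc fderiv ℝ (fun y => ∑ i, 2 * η (φ t y) * ((fderiv ℝ (fun z => v t z i) y (Pi.single k 1) + fderiv ℝ (fun z => v t z k) y (Pi.single i 1)) / 2) * v t y i - p t y * v t y k - (∑ i, v t y i * v t y i) / 2 * (rhoAff ρ₁ ρ₂ (φ t y) * v t y k - r' * (M (φ t y) * fderiv ℝ (μ t) y (Pi.single k 1))) + deriv (fun s' => φ s' y) t * fderiv ℝ (φ t) y (Pi.single k 1) + μ t y * (M (φ t y) * fderiv ℝ (μ t) y (Pi.single k 1))) x (Pi.single k 1)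
          = fderiv ℝ (fun y => ∑ i, 2 * η (φ t y) * ((fderiv ℝ (fun z => v t z i) y (Pi.single k 1) + fderiv ℝ (fun z => v t z k) y (Pi.single i 1)) / 2) * v t y i - p t y * v t y k - (∑ i, v t y i * v t y i) / 2 * (rhoAff ρ₁ ρ₂ (φ t y) * v t y k - r' * (M (φ t y) * fderiv ℝ (μ t) y (Pi.single k 1))) + deriv (fun s' => φ s' y) t * fderiv ℝ (φ t) y (Pi.single k 1)) x (Pi.single k 1)
            + fderiv ℝ (fun y => μ t y * (M (φ t y) * fderiv ℝ (μ t) y (Pi.single k 1))) x (Pi.single k 1) :=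
            fd_add ((((d1.sub d2).sub d3).add d4)) d5 (Pi.single k 1)
        _ = (fderiv ℝ (fun y => ∑ i, 2 * η (φ t y) * ((fderiv ℝ (fun z => v t z i) y (Pi.single k 1) + fderiv ℝ (fun z => v t z k) y (Pi.single i 1)) / 2) * v t y i - p t y * v t y k - (∑ i, v t y i * v t y i) / 2 * (rhoAff ρ₁ ρ₂ (φ t y) * v t y k - r' * (M (φ t y) * fderiv ℝ (μ t) y (Pi.single k 1)))) x (Pi.single k 1) + fderiv ℝ (fun y => deriv (fun s' => φ s' y) t * fderiv ℝ (φ t) y (Pi.single k 1)) x (Pi.single k 1)) + fderiv ℝ (fun y => μ t y * (M (φ t y) * fderiv ℝ (μ t) y (Pi.single k 1))) x (Pi.single k 1) :=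
            congrArg (· + fderiv ℝ (fun y => μ t y * (M (φ t y) * fderiv ℝ (μ t) y (Pi.single k 1))) x (Pi.single k 1)) (fd_add ((d1.sub d2).sub d3) d4 (Pi.single k 1))
        _ = ((fderiv ℝ (fun y => ∑ i, 2 * η (φ t y) * ((fderiv ℝ (fun z => v t z i) y (Pi.single k 1) + fderiv ℝ (fun z => v t z k) y (Pi.single i 1)) / 2) * v t y i - p t y * v t y k) x (Pi.single k 1) - fderiv ℝ (fun y => (∑ i, v t y i * v t y i) / 2 * (rhoAff ρ₁ ρ₂ (φ t y) * v t y k - r' * (M (φ t y) * fderiv ℝ (μ t) y (Pi.single k 1)))) x (Pi.single k 1)) + fderiv ℝ (fun y => deriv (fun s' => φ s' y) t * fderiv ℝ (φ t) y (Pi.single k 1)) x (Pi.single k 1)) + fderiv ℝ (fun y => μ t y * (M (φ t y) * fderiv ℝ (μ t) y (Pi.single k 1))) x (Pi.single k 1) :=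
            congrArg (fun z => (z + fderiv ℝ (fun y => deriv (fun s' => φ s' y) t * fderiv ℝ (φ t) y (Pi.single k 1)) x (Pi.single k 1)) + fderiv ℝ (fun y => μ t y * (M (φ t y) * fderiv ℝ (μ t) y (Pi.single k 1))) x (Pi.single k 1)) (fd_sub (d1.sub d2) d3 (Pi.single k 1))
        _ = (((fderiv ℝ (fun y => ∑ i, 2 * η (φ t y) * ((fderiv ℝ (fun z => v t z i) y (Pi.single k 1) + fderiv ℝ (fun z => v t z k) y (Pi.single i 1)) / 2) * v t y i) x (Pi.single k 1) - fderiv ℝ (fun y => p t y * v t y k) x (Pi.single k 1)) - fderiv ℝ (fun y => (∑ i, v t y i * v t y i) / 2 * (rhoAff ρ₁ ρ₂ (φ t y) * v t y k - r' * (M (φ t y) * fderiv ℝ (μ t) y (Pi.single k 1)))) x (Pi.single k 1)) + fderiv ℝ (fun y => deriv (fun s' => φ s' y) t * fderiv ℝ (φ t) y (Pi.single k 1)) x (Pi.single k 1)) + fderiv ℝ (fun y => μ t y * (M (φ t y) * fderiv ℝ (μ t) y (Pi.single k 1))) x (Pi.single k 1) :=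
            congrArg (fun z => ((z - fderiv ℝ (fun y => (∑ i, v t y i * v t y i) / 2 * (rhoAff ρ₁ ρ₂ (φ t y) * v t y k - r' * (M (φ t y) * fderiv ℝ (μ t) y (Pi.single k 1)))) x (Pi.single k 1)) + fderiv ℝ (fun y => deriv (fun s' => φ s' y) t * fderiv ℝ (φ t) y (Pi.single k 1)) x (Pi.single k 1)) + fderiv ℝ (fun y => μ t y * (M (φ t y) * fderiv ℝ (μ t) y (Pi.single k 1))) x (Pi.single k 1)) (fd_sub d1 d2 (Pi.single k 1))
        _ = ∑ i, (fderiv ℝ (fun y => 2 * η (φ t y) * ((fderiv ℝ (fun z => v t z i) y (Pi.single k 1) + fderiv ℝ (fun z => v t z k) y (Pi.single i 1)) / 2)) x (Pi.single k 1) * v t x i + 2 * η (φ t x) * ((fderiv ℝ (fun z => v t z i) x (Pi.single k 1) + fderiv ℝ (fun z => v t z k) x (Pi.single i 1)) / 2) * fderiv ℝ (fun z => v t z i) x (Pi.single k 1)) - (fderiv ℝ (p t) x (Pi.single k 1) * v t x k + p t x * fderiv ℝ (fun z => v t z k) x (Pi.single k 1)) - ((∑ i, (fderiv ℝ (fun z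 => v t z i) x (Pi.single k 1) * v t x i + v t x i * fderiv ℝ (fun z => v t z i) x (Pi.single k 1))) / 2 * (rhoAff ρ₁ ρ₂ (φ t x) * v t x k - r' * (M (φ t x) * fderiv ℝ (μ t) x (Pi.single k 1))) + (∑ i, v t x i * v t x i) / 2 * (r' * fderiv ℝ (φ t) x (Pi.single k 1) * v t x k + rhoAff ρ₁ ρ₂ (φ t x) * fderiv ℝ (fun z => v t z k) x (Pi.single k 1) - r' * fderiv ℝ (fun y => M (φ t y) * fderiv ℝ (μ t) y (Pi.single k 1)) x (Pi.single k 1))) + (fderiv ℝ (fun y => deriv (fun s => φ s y) t) x (Pi.single k 1) * fderiv ℝ (φ t) x (Pi.single k 1) + deriv (fun s => φ s x) t * fderiv ℝ (fun y => fderiv ℝ (φ t) y (Pi.single k 1)) x (Pi.single k 1)) + (fderiv ℝ (μ t) x (Pi.single k 1) * (M (φ t x) * fderiv ℝ (μ t) x (Pi.single k 1)) + μ t x * fderiv ℝ (fun y => M (φ t y) * fderiv ℝ (μ t) y (Pi.single k 1)) x (Pi.single k 1)) := by rw [hb1, hb2, hb3, hb4, hb5]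
    rw [Finset.sum_congr rfl fun k _ => hdG k]
    exact endgame (v t x) (fun i => deriv (fun s => v s x i) t)
      (fun k => fderiv ℝ (φ t) x (Pi.single k 1))
      (fun k => fderiv ℝ (μ t) x (Pi.single k 1))
      (fun k => fderiv ℝ (p t) x (Pi.single k 1))
      (fun k => fderiv ℝ (fun y => fderiv ℝ (φ t) y (Pi.single k 1)) x (Pi.single k 1))
      (fun k => fderiv ℝ (fun y => deriv (fun s => φ s y) t) x (Pi.single k 1))
      (fun k => fderiv ℝ (fun y => M (φ t y) * fderiv ℝ (μ t) y (Pi.single k 1)) x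
        (Pi.single k 1))
      (fun a b => fderiv ℝ (fun z => v t z a) x (Pi.single b 1))
      (fun i k => fderiv ℝ (fun y => 2 * η (φ t y)
        * ((fderiv ℝ (fun z => v t z i) y (Pi.single k 1)
          + fderiv ℝ (fun z => v t z k) y (Pi.single i 1)) / 2)) x (Pi.single k 1))
      r' (rhoAff ρ₁ ρ₂ (φ t x)) (η (φ t x)) (M (φ t x)) (μ t x) (p t x)
      (deriv (fun s => φ s x) t) (deriv F (φ t x)) Hmom Hph Hchem Hdiv
  -- integral of the divergence vanishes
  have hIoo : ∀ t ∈ Ioo (0:ℝ) T, (∫ x, deriv (fun s => e s x) t) = -(∫ x, dis t x) := by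
    intro t ht
    have hte_eq : (fun x => deriv (fun s => e s x) t)
        = fun x => fderiv ℝ (fun q : ℝ × (Fin d → ℝ) => e q.1 q.2) (t, x) (1, 0) :=
      funext fun x => deriv_time he_joint t x
    have hte_cont : Continuous fun x => deriv (fun s => e s x) t := by
      rw [hte_eq]
      exact ((joint_fderiv_contDiff he_joint (1, 0)).continuous).comp
        (continuous_const.prodMk continuous_id)
    have hte0 : ∀ x ∉ K, deriv (fun s => e s x) t = 0 := by
      intro x hx
      have : (fun s => e s x) = fun _ => 0 := funext fun s => he0 s x hx
      rw [this]; simp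
    have hdis_cont_t : Continuous (dis t) :=
      hdis_joint.continuous.comp (continuous_const.prodMk continuous_id)
    have hzero : ∫ x, (deriv (fun s => e s x) t + dis t x) = 0 := by
      have hcongr : (fun x => deriv (fun s => e s x) t + dis t x)
          = fun x => ∑ k, fderiv ℝ (G k t) x (Pi.single k 1) :=
        funext fun x => hpt t ht x
      rw [hcongr]
      have hint : ∀ k : Fin d, Integrable fun x => fderiv ℝ (G k t) x (Pi.single k 1) := by
        intro k
        apply integrable_of_supp hK
        · exact (((hG_slice k t).fderiv_right (m := (⊤:ℕ∞))
            (by exact_mod_cast le_top)).continuous).clm_apply continuous_const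
        · intro x hx
          rw [hfd0 (G k t) (hG0 k t) x hx]; rfl
      rw [integral_finset_sum _ (fun k _ => hint k)]
      apply Finset.sum_eq_zero
      intro k _
      exact integral_pderiv_eq_zero hK (hG_slice k t) (hG0 k t) k
    have hInt1 : Integrable fun x => deriv (fun s => e s x) t :=
      integrable_of_supp hK hte_cont hte0
    have hInt2 : Integrable (dis t) := integrable_of_supp hK hdis_cont_t (hdis0 t)
    rw [integral_add hInt1 hInt2] at hzero
    linarith
  -- energy as a function of time
  have hEderiv : ∀ t₀, HasDerivAt (fun t => ∫ x, e t x)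
      (∫ x, deriv (fun s => e s x) t₀) t₀ :=
    fun t₀ => hasDerivAt_integral_param hK he_joint he0 t₀
  -- dissipation terms
  set D1 : ℝ → ℝ := fun t => ∫ x, M (φ t x) * dot (grad (μ t) x) (grad (μ t) x) with hD1_def
  set D2 : ℝ → ℝ := fun t =>
    ∫ x, 2 * η (φ t x) * frob (symGrad (v t) x) (symGrad (v t) x) with hD2_def
  have hd1_joint : Continuous fun q : ℝ × (Fin d → ℝ) =>
      M (φ q.1 q.2) * dot (grad (μ q.1) q.2) (grad (μ q.1) q.2) := by
    have : ContDiff ℝ (⊤:ℕ∞) fun q : ℝ × (Fin d → ℝ) =>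
        M (φ q.1 q.2) * dot (grad (μ q.1) q.2) (grad (μ q.1) q.2) := by
      simp only [dot, grad]
      exact (hM.comp hφ).mul
        (ContDiff.sum fun k _ => (hgμ (Pi.single k 1)).mul (hgμ (Pi.single k 1)))
    exact this.continuous
  have hd2_joint : Continuous fun q : ℝ × (Fin d → ℝ) =>
      2 * η (φ q.1 q.2) * frob (symGrad (v q.1) q.2) (symGrad (v q.1) q.2) := by
    have : ContDiff ℝ (⊤:ℕ∞) fun q : ℝ × (Fin d → ℝ) =>
        2 * η (φ q.1 q.2) * frob (symGrad (v q.1) q.2) (symGrad (v q.1) q.2) := by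
      simp only [frob]
      exact (contDiff_const.mul (hη.comp hφ)).mul
        (ContDiff.sum fun i _ => ContDiff.sum fun k _ => (hsymJ i k).mul (hsymJ i k))
    exact this.continuous
  have hd10 : ∀ t, ∀ x ∉ K, M (φ t x) * dot (grad (μ t) x) (grad (μ t) x) = 0 := by
    intro t x hx
    have h2 : dot (grad (μ t) x) (grad (μ t) x) = 0 := by
      simp only [dot, grad]
      apply Finset.sum_eq_zero; intro k _
      rw [hgrad0 μ hμ0 t x hx]; ring
    rw [h2]; ring
  have hd20 : ∀ t, ∀ x ∉ K, 2 * η (φ t x) * frob (symGrad (v t) x) (symGrad (v t) x) = 0 := by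
    intro t x hx
    have h3 : frob (symGrad (v t) x) (symGrad (v t) x) = 0 := by
      simp only [frob]
      apply Finset.sum_eq_zero; intro i _
      apply Finset.sum_eq_zero; intro k _
      have hsik : symGrad (v t) x i k = 0 := by
        simp only [symGrad, Matrix.of_apply, hjac]
        rw [hfd0 (fun y => v t y i) (fun y hy => hv0 t y hy i) x hx,
          hfd0 (fun y => v t y k) (fun y hy => hv0 t y hy k) x hx]
        simp
      rw [hsik]; ring
    rw [h3]; ring
  have hD1cont : Continuous D1 := continuous_integral_param hK hd1_joint hd10
  have hD2cont : Continuous D2 := continuous_integral_param hK hd2_joint hd20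
  have hDsplit : ∀ t, (∫ x, dis t x) = D1 t + D2 t := by
    intro t
    simp only [hdis_def, hD1_def, hD2_def]
    apply integral_add
    · exact integrable_of_supp hK
        (hd1_joint.comp (continuous_const.prodMk continuous_id)) (hd10 t)
    · exact integrable_of_supp hK
        (hd2_joint.comp (continuous_const.prodMk continuous_id)) (hd20 t)
  -- FTC
  have hFTC : ∫ t in (0:ℝ)..T, (-(D1 t + D2 t)) = (∫ x, e T x) - ∫ x, e 0 x := by
    apply intervalIntegral.integral_eq_sub_of_hasDeriv_right_of_le hT.le
    · intro t _
      exact ((hEderiv t).continuousAt).continuousWithinAt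
    · intro t ht
      have h := (hEderiv t).hasDerivWithinAt (s := Ioi t)
      rw [hIoo t ht, hDsplit t] at h
      exact h
    · exact ((hD1cont.add hD2cont).neg).intervalIntegrable 0 T
  have hFTC2 : ∫ t in (0:ℝ)..T, (-(D1 t + D2 t))
      = -(∫ t in (0:ℝ)..T, D1 t) - ∫ t in (0:ℝ)..T, D2 t := by
    rw [intervalIntegral.integral_neg, intervalIntegral.integral_add
      (hD1cont.intervalIntegrable 0 T) (hD2cont.intervalIntegrable 0 T)]
    ring
  -- split the energy integral into its three parts
  have hsplitE : ∀ t, (∫ x, e t x)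
      = (1/2) * (∫ x, rhoAff ρ₁ ρ₂ (φ t x) * dot (v t x) (v t x))
        + (1/2) * (∫ x, dot (grad (φ t) x) (grad (φ t) x))
        + ∫ x, F (φ t x) := by
    intro t
    have i1 : Integrable fun x => rhoAff ρ₁ ρ₂ (φ t x) * dot (v t x) (v t x) := by
      apply integrable_of_supp hK
      · have : ContDiff ℝ (⊤:ℕ∞) fun q : ℝ × (Fin d → ℝ) =>
            rhoAff ρ₁ ρ₂ (φ q.1 q.2) * dot (v q.1 q.2) (v q.1 q.2) := by
          simp only [rhoAff, dot]
          exact (contDiff_const.add (contDiff_const.mul hφ)).mul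
            (ContDiff.sum fun i _ => (hvi i).mul (hvi i))
        exact this.continuous.comp (continuous_const.prodMk continuous_id)
      · intro x hx
        have : dot (v t x) (v t x) = 0 := by
          simp only [dot]
          exact Finset.sum_eq_zero fun i _ => by rw [hv0 t x hx i]; ring
        rw [this]; ring
    have i2 : Integrable fun x => dot (grad (φ t) x) (grad (φ t) x) := by
      apply integrable_of_supp hK
      · have : ContDiff ℝ (⊤:ℕ∞) fun q : ℝ × (Fin d → ℝ) =>
            dot (grad (φ q.1) q.2) (grad (φ q.1) q.2) := by
          simp only [dot, grad]
          exact ContDiff.sum fun k _ => (hgφ (Pi.single k 1)).mul (hgφ (Pi.single k 1))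
        exact this.continuous.comp (continuous_const.prodMk continuous_id)
      · intro x hx
        simp only [dot, grad]
        exact Finset.sum_eq_zero fun k _ => by rw [hgrad0 φ hφ0 t x hx]; ring
    have i3 : Integrable fun x => F (φ t x) := by
      apply integrable_of_supp hK
      · exact (hF.comp hφ).continuous.comp (continuous_const.prodMk continuous_id)
      · intro x hx; rw [hφ0 t x hx, hF0]
    simp only [he_def]
    have h4 : (∫ x, (rhoAff ρ₁ ρ₂ (φ t x) * dot (v t x) (v t x) / 2
          + dot (grad (φ t) x) (grad (φ t) x) / 2 + F (φ t x)))
        = (∫ x, (rhoAff ρ₁ ρ₂ (φ t x) * dot (v t x) (v t x) / 2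
          + dot (grad (φ t) x) (grad (φ t) x) / 2)) + ∫ x, F (φ t x) :=
      integral_add ((i1.div_const 2).add (i2.div_const 2)) i3
    have h5 : (∫ x, (rhoAff ρ₁ ρ₂ (φ t x) * dot (v t x) (v t x) / 2
          + dot (grad (φ t) x) (grad (φ t) x) / 2))
        = (∫ x, rhoAff ρ₁ ρ₂ (φ t x) * dot (v t x) (v t x) / 2)
          + ∫ x, dot (grad (φ t) x) (grad (φ t) x) / 2 :=
      integral_add (i1.div_const 2) (i2.div_const 2)
    have h6 : (∫ x, rhoAff ρ₁ ρ₂ (φ t x) * dot (v t x) (v t x) / 2)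
        = (∫ x, rhoAff ρ₁ ρ₂ (φ t x) * dot (v t x) (v t x)) / 2 := integral_div 2 _
    have h7 : (∫ x, dot (grad (φ t) x) (grad (φ t) x) / 2)
        = (∫ x, dot (grad (φ t) x) (grad (φ t) x)) / 2 := integral_div 2 _
    rw [h4, h5, h6, h7]
    ring
  -- finish
  have hgoal := hFTC
  rw [hFTC2, hsplitE T, hsplitE 0] at hgoal
  have hD1eq : (∫ t in (0:ℝ)..T, D1 t)
      = ∫ t in (0:ℝ)..T, ∫ x, M (φ t x) * dot (grad (μ t) x) (grad (μ t) x) := rfl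
  have hD2eq : (∫ t in (0:ℝ)..T, D2 t)
      = ∫ t in (0:ℝ)..T, ∫ x, 2 * η (φ t x) * frob (symGrad (v t) x) (symGrad (v t) x) := rfl
  rw [← hD1eq, ← hD2eq]
  linarith
end
end

section
/- Let d ≥ 1. Suppose v : ℝ^d × (0,T) → ℝ^d and p, φ, μ : ℝ^d × (0,T) → ℝ are smooth, supported for every t in a fixed compact set K ⊂ ℝ^d, that div v = 0 everywhere, and that the momentum equation ρ(φ)∂ₜv + ((ρ(φ)v + ρ′ j)·∇)v − div(2η(φ)Dv) + ∇p = μ∇φ holds pointwise, where j := −M(φ)∇μ. Then for every t ∈ (0,T): (1/2)∫_{ℝ^d} ρ(φ)∂ₜ|v|² − (1/2)∫_{ℝ^d} ρ′⟨v,∇φ⟩|v|² + (1/2)∫_{ℝ^d} ρ′⟨j,∇|v|²⟩ + ∫_{ℝ^d} 2η(φ)|Dv|² = ∫_{ℝ^d} μ⟨v,∇φ⟩. -/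
open MeasureTheory Set Matrix

noncomputable section

open scoped Topology

variable {d : ℕ}

lemma aux_fderiv_apply_contDiff {F : Type*} [NormedAddCommGroup F] [NormedSpace ℝ F]
    {f : (Fin d → ℝ) → F} (hf : ContDiff ℝ (⊤ : ℕ∞) f) (w : Fin d → ℝ) :
    ContDiff ℝ (⊤ : ℕ∞) fun x => fderiv ℝ f x w :=
  (hf.fderiv_right (by exact_mod_cast le_top)).clm_apply contDiff_const

lemma aux_fderiv_off {F : Type*} [NormedAddCommGroup F] [NormedSpace ℝ F]
    {K : Set (Fin d → ℝ)} (hKc : IsClosed K) {f : (Fin d → ℝ) → F}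
    (h0 : ∀ x ∉ K, f x = 0) {x : Fin d → ℝ} (hx : x ∉ K) : fderiv ℝ f x = 0 := by
  have hev : f =ᶠ[𝓝 x] fun _ => 0 := by
    filter_upwards [hKc.isOpen_compl.mem_nhds hx] with y hy using h0 y hy
  rw [hev.fderiv_eq]
  exact fderiv_const_apply 0

lemma aux_integrable {K : Set (Fin d → ℝ)} (hK : IsCompact K)
    {f : (Fin d → ℝ) → ℝ} (hf : Continuous f) (h0 : ∀ x ∉ K, f x = 0) :
    Integrable f :=
  hf.integrable_of_hasCompactSupport (HasCompactSupport.intro hK h0)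

lemma aux_ibp {K : Set (Fin d → ℝ)} (hK : IsCompact K)
    {f g : (Fin d → ℝ) → ℝ} (hf : ContDiff ℝ (⊤ : ℕ∞) f) (hg : ContDiff ℝ (⊤ : ℕ∞) g)
    (h0 : ∀ x ∉ K, f x = 0) (w : Fin d → ℝ) :
    ∫ x, f x * fderiv ℝ g x w = - ∫ x, fderiv ℝ f x w * g x := by
  apply integral_mul_fderiv_eq_neg_fderiv_mul_of_integrable
  · exact aux_integrable hK ((aux_fderiv_apply_contDiff hf w).continuous.mul hg.continuous)
      (fun x hx => by rw [aux_fderiv_off hK.isClosed h0 hx]; simp)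
  · exact aux_integrable hK (hf.continuous.mul (aux_fderiv_apply_contDiff hg w).continuous)
      (fun x hx => by rw [h0 x hx]; ring)
  · exact aux_integrable hK (hf.continuous.mul hg.continuous) (fun x hx => by rw [h0 x hx]; ring)
  · exact fun x _ => hf.differentiable (by simp) x
  · exact fun x _ => hg.differentiable (by simp) x

lemma aux_sum_antisymm {n : ℕ} (f : Fin n → Fin n → ℝ)
    (hf : ∀ i k, f i k = - f k i) : ∑ i, ∑ k, f i k = 0 := by
  have h1 : ∑ i, ∑ k, f i k = ∑ k, ∑ i, f i k := Finset.sum_comm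
  have h2 : ∑ k, ∑ i, f i k = - ∑ k, ∑ i, f k i := by
    have hcol : ∀ k, ∑ i, f i k = - ∑ i, f k i := fun k => by
      rw [← Finset.sum_neg_distrib]; exact Finset.sum_congr rfl fun i _ => hf i k
    rw [Finset.sum_congr rfl fun k _ => hcol k, Finset.sum_neg_distrib]
  linarith [h1, h2]


/-- Identity (2.2a): testing the momentum equation of the Abels–Garcke–Grün
model with the velocity `v`. -/
theorem momentum_tested_with_velocity
    {d : ℕ} (hd : 1 ≤ d) {T : ℝ} (hT : 0 < T)
    {ρ₁ ρ₂ : ℝ} (hρ₁ : 0 < ρ₁) (hρ₂ : 0 < ρ₂)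
    (M η : ℝ → ℝ)
    (hM : ContDiff ℝ (⊤ : ℕ∞) M) (hη : ContDiff ℝ (⊤ : ℕ∞) η)
    (hMnn : ∀ s, 0 ≤ M s) (hηpos : ∀ s, 0 < η s)
    (v : ℝ → (Fin d → ℝ) → Fin d → ℝ) (p φ μ : ℝ → (Fin d → ℝ) → ℝ)
    (hv : ContDiff ℝ (⊤ : ℕ∞) fun q : ℝ × (Fin d → ℝ) => v q.1 q.2)
    (hp : ContDiff ℝ (⊤ : ℕ∞) fun q : ℝ × (Fin d → ℝ) => p q.1 q.2)
    (hφ : ContDiff ℝ (⊤ : ℕ∞) fun q : ℝ × (Fin d → ℝ) => φ q.1 q.2)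
    (hμ : ContDiff ℝ (⊤ : ℕ∞) fun q : ℝ × (Fin d → ℝ) => μ q.1 q.2)
    {K : Set (Fin d → ℝ)} (hK : IsCompact K)
    (hsupp : ∀ t, ∀ x ∉ K, v t x = 0 ∧ p t x = 0 ∧ φ t x = 0 ∧ μ t x = 0)
    -- incompressibility everywhere
    (hdiv : ∀ t x, divg (v t) x = 0)
    -- momentum equation: ρ(φ)∂ₜv + ((ρ(φ)v + ρ′ j)·∇)v − div(2η(φ)Dv) + ∇p = μ∇φ,
    -- where j = −M(φ)∇μ
    (hmom : ∀ t ∈ Ioo (0:ℝ) T, ∀ x, ∀ i,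
      rhoAff ρ₁ ρ₂ (φ t x) * deriv (fun s => v s x i) t
        + (∑ k, (rhoAff ρ₁ ρ₂ (φ t x) * v t x k
            + (ρ₂ - ρ₁) / 2 * (-(M (φ t x) * grad (μ t) x k))) * jac (v t) x i k)
        - (∑ k, fderiv ℝ (fun y => 2 * η (φ t y) * symGrad (v t) y i k) x (Pi.single k 1))
        + grad (p t) x i
      = μ t x * grad (φ t) x i) :
    ∀ t ∈ Ioo (0:ℝ) T,
      (1/2) * (∫ x, rhoAff ρ₁ ρ₂ (φ t x) * deriv (fun s => dot (v s x) (v s x)) t)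
        - (1/2) * (∫ x, (ρ₂ - ρ₁) / 2 * dot (v t x) (grad (φ t) x) * dot (v t x) (v t x))
        + (1/2) * (∫ x, (ρ₂ - ρ₁) / 2 *
            dot (fun k => -(M (φ t x) * grad (μ t) x k))
              (grad (fun y => dot (v t y) (v t y)) x))
        + (∫ x, 2 * η (φ t x) * frob (symGrad (v t) x) (symGrad (v t) x))
      = ∫ x, μ t x * dot (v t x) (grad (φ t) x) := by
  intro t ht
  have hKc : IsClosed K := hK.isClosed
  have htop : (1 : ℕ∞) ≤ (⊤ : ℕ∞) := le_top
  -- time slices are smooth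
  have hVs : ContDiff ℝ (⊤ : ℕ∞) (v t) := hv.comp (contDiff_const.prodMk contDiff_id)
  have hφs : ContDiff ℝ (⊤ : ℕ∞) (φ t) := hφ.comp (contDiff_const.prodMk contDiff_id)
  have hps : ContDiff ℝ (⊤ : ℕ∞) (p t) := hp.comp (contDiff_const.prodMk contDiff_id)
  have hμs : ContDiff ℝ (⊤ : ℕ∞) (μ t) := hμ.comp (contDiff_const.prodMk contDiff_id)
  have hVi : ∀ i, ContDiff ℝ (⊤ : ℕ∞) (fun y => v t y i) := fun i => contDiff_pi.mp hVs i
  have hVdiff : Differentiable ℝ (v t) := hVs.differentiable (by simp)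
  have hVi' : ∀ i x, HasFDerivAt (fun y => v t y i) (fderiv ℝ (fun y => v t y i) x) x :=
    fun i x => (((hVi i).differentiable (by simp)) x).hasFDerivAt
  -- support facts
  have hV0 : ∀ x ∉ K, v t x = 0 := fun x hx => (hsupp t x hx).1
  have hVi0 : ∀ i, ∀ x ∉ K, v t x i = 0 := fun i x hx => by rw [hV0 x hx]; rfl
  -- jacobian components
  have hjac' : ∀ x i, fderiv ℝ (fun y => v t y i) x
      = (ContinuousLinearMap.proj i).comp (fderiv ℝ (v t) x) := fun x i =>
    (((ContinuousLinearMap.proj (R := ℝ) (φ := fun _ : Fin d => ℝ) i)).hasFDerivAt.comp x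
      (hVdiff x).hasFDerivAt).fderiv
  have hjac : ∀ x i k, jac (v t) x i k = fderiv ℝ (fun y => v t y i) x (Pi.single k 1) := by
    intro x i k; rw [hjac']; rfl
  -- time derivative of velocity components
  have hvt : ∀ x i, HasDerivAt (fun s => v s x i)
      (fderiv ℝ (fun q : ℝ × (Fin d → ℝ) => v q.1 q.2) (t, x) (1, 0) i) t := by
    intro x i
    have hF : HasFDerivAt (fun q : ℝ × (Fin d → ℝ) => v q.1 q.2)
        (fderiv ℝ (fun q : ℝ × (Fin d → ℝ) => v q.1 q.2) (t, x)) (t, x) :=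
      ((hv.differentiable (by simp)) (t, x)).hasFDerivAt
    have hcurve : HasDerivAt (fun s : ℝ => ((s, x) : ℝ × (Fin d → ℝ)))
        ((1 : ℝ), (0 : Fin d → ℝ)) t := (hasDerivAt_id t).prodMk (hasDerivAt_const t x)
    have h1 := hF.comp_hasDerivAt t hcurve
    exact ((ContinuousLinearMap.proj (R := ℝ) (φ := fun _ : Fin d => ℝ) i)).hasFDerivAt.comp_hasDerivAt t h1
  have hvtd : ∀ x i, deriv (fun s => v s x i) t
      = fderiv ℝ (fun q : ℝ × (Fin d → ℝ) => v q.1 q.2) (t, x) (1, 0) i :=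
    fun x i => (hvt x i).deriv
  have hvtc : ∀ i, Continuous fun x => deriv (fun s => v s x i) t := by
    intro i
    have h1 : Continuous fun x : Fin d → ℝ =>
        fderiv ℝ (fun q : ℝ × (Fin d → ℝ) => v q.1 q.2) (t, x) :=
      (hv.continuous_fderiv (by simp)).comp (continuous_const.prodMk continuous_id)
    have h2 : Continuous fun x : Fin d → ℝ =>
        fderiv ℝ (fun q : ℝ × (Fin d → ℝ) => v q.1 q.2) (t, x) (1, 0) i :=
      (continuous_apply i).comp (h1.clm_apply continuous_const)
    simpa only [← hvtd] using h2
  have hvt0 : ∀ i, ∀ x ∉ K, deriv (fun s => v s x i) t = 0 := by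
    intro i x hx
    have : (fun s => v s x i) = fun _ => 0 := funext fun s => by rw [(hsupp s x hx).1]; rfl
    rw [this, deriv_const]
  -- smoothness of various auxiliary scalar fields
  have hRs : ContDiff ℝ (⊤ : ℕ∞) (fun x => rhoAff ρ₁ ρ₂ (φ t x)) :=
    contDiff_const.add (contDiff_const.mul hφs)
  have hR' : ∀ x, HasFDerivAt (fun x => rhoAff ρ₁ ρ₂ (φ t x))
      (((ρ₂ - ρ₁) / 2) • fderiv ℝ (φ t) x) x := fun x =>
    ((((hφs.differentiable (by simp)) x).hasFDerivAt.const_mul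
      ((ρ₂ - ρ₁) / 2)).const_add ((ρ₂ + ρ₁) / 2))
  have hjacs : ∀ i k, ContDiff ℝ (⊤ : ℕ∞) (fun y => jac (v t) y i k) := fun i k =>
    contDiff_pi.mp (aux_fderiv_apply_contDiff hVs (Pi.single k 1)) i
  have hSs : ∀ i k, ContDiff ℝ (⊤ : ℕ∞) (fun y => 2 * η (φ t y) * symGrad (v t) y i k) :=
    fun i k => (contDiff_const.mul (hη.comp hφs)).mul (((hjacs i k).add (hjacs k i)).div_const 2)
  have hS0 : ∀ i k, ∀ x ∉ K, 2 * η (φ t x) * symGrad (v t) x i k = 0 := by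
    intro i k x hx
    have h0 : fderiv ℝ (v t) x = 0 := aux_fderiv_off hKc hV0 hx
    simp [symGrad, jac, h0]
  have hq2s : ContDiff ℝ (⊤ : ℕ∞) (fun y => dot (v t y) (v t y)) :=
    ContDiff.sum fun i _ => (hVi i).mul (hVi i)
  have hq20 : ∀ x ∉ K, dot (v t x) (v t x) = 0 := by
    intro x hx; simp [dot, hVi0 _ x hx]
  -- gradient of |v|^2
  have hq2' : ∀ x, HasFDerivAt (fun y => dot (v t y) (v t y))
      (∑ i, (v t x i • fderiv ℝ (fun y => v t y i) x + v t x i • fderiv ℝ (fun y => v t y i) x)) x :=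
    fun x => HasFDerivAt.fun_sum fun i _ => (hVi' i x).mul (hVi' i x)
  have hgradq2 : ∀ x k, fderiv ℝ (fun y => dot (v t y) (v t y)) x (Pi.single k 1)
      = ∑ i, 2 * v t x i * jac (v t) x i k := by
    intro x k
    rw [(hq2' x).fderiv, ContinuousLinearMap.sum_apply]
    refine Finset.sum_congr rfl fun i _ => ?_
    rw [hjac]
    simp only [ContinuousLinearMap.add_apply, ContinuousLinearMap.smul_apply, smul_eq_mul]
    ring
  -- atoms
  set A : Fin d → (Fin d → ℝ) → ℝ :=
    fun i x => rhoAff ρ₁ ρ₂ (φ t x) * deriv (fun s => v s x i) t * v t x i with hAdef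
  set B : Fin d → Fin d → (Fin d → ℝ) → ℝ :=
    fun i k x => rhoAff ρ₁ ρ₂ (φ t x) * v t x k * jac (v t) x i k * v t x i with hBdef
  set C : Fin d → Fin d → (Fin d → ℝ) → ℝ :=
    fun i k x => (ρ₂ - ρ₁) / 2 * (-(M (φ t x) * grad (μ t) x k)) * jac (v t) x i k * v t x i with hCdef
  set D : Fin d → Fin d → (Fin d → ℝ) → ℝ :=
    fun i k x => fderiv ℝ (fun y => 2 * η (φ t y) * symGrad (v t) y i k) x (Pi.single k 1) * v t x i with hDdef
  set E : Fin d → (Fin d → ℝ) → ℝ := fun i x => grad (p t) x i * v t x i with hEdef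
  set G : Fin d → (Fin d → ℝ) → ℝ := fun i x => μ t x * grad (φ t) x i * v t x i with hGdef
  -- integrability of atoms
  have hIA : ∀ i, Integrable (A i) := fun i =>
    aux_integrable hK ((hRs.continuous.mul (hvtc i)).mul (hVi i).continuous)
      (fun x hx => by simp [hAdef, hVi0 i x hx])
  have hIB : ∀ i k, Integrable (B i k) := fun i k =>
    aux_integrable hK (((hRs.continuous.mul (hVi k).continuous).mul (hjacs i k).continuous).mul
      (hVi i).continuous) (fun x hx => by simp [hBdef, hVi0 i x hx])
  have hIC : ∀ i k, Integrable (C i k) := fun i k =>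
    aux_integrable hK (((continuous_const.mul ((hM.continuous.comp hφs.continuous).mul
      ((aux_fderiv_apply_contDiff hμs (Pi.single k 1)).continuous)).neg).mul
      (hjacs i k).continuous).mul (hVi i).continuous)
      (fun x hx => by simp [hCdef, hVi0 i x hx])
  have hID : ∀ i k, Integrable (D i k) := fun i k =>
    aux_integrable hK ((aux_fderiv_apply_contDiff (hSs i k) (Pi.single k 1)).continuous.mul
      (hVi i).continuous) (fun x hx => by simp [hDdef, hVi0 i x hx])
  have hIE : ∀ i, Integrable (E i) := fun i =>
    aux_integrable hK ((aux_fderiv_apply_contDiff hps (Pi.single i 1)).continuous.mul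
      (hVi i).continuous) (fun x hx => by simp [hEdef, hVi0 i x hx])
  have hIG : ∀ i, Integrable (G i) := fun i =>
    aux_integrable hK ((hμs.continuous.mul
      ((aux_fderiv_apply_contDiff hφs (Pi.single i 1)).continuous)).mul (hVi i).continuous)
      (fun x hx => by simp [hGdef, hVi0 i x hx])
  -- pointwise form of the tested momentum equation
  have hptw : ∀ i x, G i x = A i x + (∑ k, (B i k x + C i k x)) - (∑ k, D i k x) + E i x := by
    intro i x
    have hm := congrArg (fun z : ℝ => z * v t x i) (hmom t ht x i)
    simp only [add_mul, sub_mul, Finset.sum_mul] at hm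
    simp only [hAdef, hBdef, hCdef, hDdef, hEdef, hGdef]
    linarith [hm]
  -- integral form, split into atoms
  have hsplit : ∀ i, ∫ x, G i x = (∫ x, A i x) + ((∑ k, ∫ x, B i k x) + (∑ k, ∫ x, C i k x))
      - (∑ k, ∫ x, D i k x) + ∫ x, E i x := by
    intro i
    have hS1 : Integrable fun x => ∑ k, (B i k x + C i k x) :=
      integrable_finset_sum _ fun k _ => (hIB i k).add (hIC i k)
    have hS2 : Integrable fun x => ∑ k, D i k x :=
      integrable_finset_sum _ fun k _ => hID i k
    have h1 : (∫ x, (A i x + (∑ k, (B i k x + C i k x)) - ∑ k, D i k x) + E i x)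
        = (∫ x, A i x + (∑ k, (B i k x + C i k x)) - ∑ k, D i k x) + ∫ x, E i x :=
      integral_add (((hIA i).add hS1).sub hS2) (hIE i)
    have h2 : (∫ x, A i x + (∑ k, (B i k x + C i k x)) - ∑ k, D i k x)
        = (∫ x, A i x + (∑ k, (B i k x + C i k x))) - ∫ x, ∑ k, D i k x :=
      integral_sub ((hIA i).add hS1) hS2
    have h3 : (∫ x, A i x + (∑ k, (B i k x + C i k x)))
        = (∫ x, A i x) + ∫ x, ∑ k, (B i k x + C i k x) := integral_add (hIA i) hS1
    have h4 : (∫ x, ∑ k, (B i k x + C i k x)) = ∑ k, ∫ x, (B i k x + C i k x) :=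
      integral_finset_sum _ (fun k _ => (hIB i k).add (hIC i k))
    have h5 : (∫ x, ∑ k, D i k x) = ∑ k, ∫ x, D i k x :=
      integral_finset_sum _ (fun k _ => hID i k)
    have h6 : (∑ k, ∫ x, (B i k x + C i k x)) = (∑ k, ∫ x, B i k x) + ∑ k, ∫ x, C i k x := by
      rw [Finset.sum_congr rfl (fun k _ => integral_add (hIB i k) (hIC i k)),
        Finset.sum_add_distrib]
    rw [show (fun x => G i x)
        = fun x => A i x + (∑ k, (B i k x + C i k x)) - (∑ k, D i k x) + E i x
        from funext (hptw i)]
    rw [h1, h2, h3, h4, h5, h6]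
  -- Step alpha: the time-derivative term
  have hvt' : ∀ x i, HasDerivAt (fun s => v s x i) (deriv (fun s => v s x i) t) t :=
    fun x i => by rw [hvtd]; exact hvt x i
  have hI1 : (∫ x, rhoAff ρ₁ ρ₂ (φ t x) * deriv (fun s => dot (v s x) (v s x)) t)
      = 2 * ∑ i, ∫ x, A i x := by
    have hpt : ∀ x, rhoAff ρ₁ ρ₂ (φ t x) * deriv (fun s => dot (v s x) (v s x)) t
        = ∑ i, 2 * A i x := by
      intro x
      have hd : HasDerivAt (fun s => dot (v s x) (v s x))
          (∑ i, (deriv (fun s => v s x i) t * v t x i + v t x i * deriv (fun s => v s x i) t)) t :=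
        HasDerivAt.fun_sum fun i _ => (hvt' x i).mul (hvt' x i)
      rw [hd.deriv, Finset.mul_sum]
      exact Finset.sum_congr rfl fun i _ => by simp only [hAdef]; ring
    rw [show (fun x => rhoAff ρ₁ ρ₂ (φ t x) * deriv (fun s => dot (v s x) (v s x)) t)
        = fun x => ∑ i, 2 * A i x from funext hpt,
      integral_finset_sum _ (fun i _ => (hIA i).const_mul 2)]
    simp only [integral_const_mul]
    rw [← Finset.mul_sum]
  -- Step beta: the convection term
  have hIRVq2 : ∀ k, Integrable (fun x =>
      fderiv ℝ (fun y => rhoAff ρ₁ ρ₂ (φ t y) * v t y k) x (Pi.single k 1) * dot (v t x) (v t x)) :=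
    fun k => aux_integrable hK
      ((aux_fderiv_apply_contDiff (hRs.mul (hVi k)) (Pi.single k 1)).continuous.mul hq2s.continuous)
      (fun x hx => by rw [hq20 x hx, mul_zero])
  have hBk : ∀ k, (∑ i, ∫ x, B i k x) = (1/2) * ∫ x, (rhoAff ρ₁ ρ₂ (φ t x) * v t x k)
      * fderiv ℝ (fun y => dot (v t y) (v t y)) x (Pi.single k 1) := by
    intro k
    rw [← integral_finset_sum _ (fun i _ => hIB i k), ← integral_const_mul]
    congr 1; funext x
    rw [hgradq2 x k, Finset.mul_sum, Finset.mul_sum]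
    exact Finset.sum_congr rfl fun i _ => by simp only [hBdef]; ring
  have hibpk : ∀ k, (∫ x, (rhoAff ρ₁ ρ₂ (φ t x) * v t x k)
        * fderiv ℝ (fun y => dot (v t y) (v t y)) x (Pi.single k 1))
      = - ∫ x, fderiv ℝ (fun y => rhoAff ρ₁ ρ₂ (φ t y) * v t y k) x (Pi.single k 1)
        * dot (v t x) (v t x) :=
    fun k => aux_ibp hK (hRs.mul (hVi k)) hq2s (fun x hx => by rw [hVi0 k x hx, mul_zero]) _
  have hsumk : (∑ k, ∫ x, fderiv ℝ (fun y => rhoAff ρ₁ ρ₂ (φ t y) * v t y k) x (Pi.single k 1)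
        * dot (v t x) (v t x))
      = ∫ x, (ρ₂ - ρ₁) / 2 * dot (v t x) (grad (φ t) x) * dot (v t x) (v t x) := by
    rw [← integral_finset_sum _ (fun k _ => hIRVq2 k)]
    congr 1; funext x
    rw [← Finset.sum_mul]
    congr 1
    have hterm : ∀ k, fderiv ℝ (fun y => rhoAff ρ₁ ρ₂ (φ t y) * v t y k) x (Pi.single k 1)
        = rhoAff ρ₁ ρ₂ (φ t x) * jac (v t) x k k
          + v t x k * ((ρ₂ - ρ₁) / 2 * fderiv ℝ (φ t) x (Pi.single k 1)) := by
      intro k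
      rw [((hR' x).fun_mul (hVi' k x)).fderiv]
      simp only [ContinuousLinearMap.add_apply, ContinuousLinearMap.smul_apply, smul_eq_mul]
      rw [hjac]
    rw [Finset.sum_congr rfl fun k _ => hterm k, Finset.sum_add_distrib, ← Finset.mul_sum]
    have hdivv : (∑ k, jac (v t) x k k) = divg (v t) x := by simp [jac, divg]
    rw [hdivv, hdiv t x, mul_zero, zero_add]
    simp only [dot, grad, Finset.mul_sum]
    exact Finset.sum_congr rfl fun k _ => by ring
  have hI2 : (∫ x, (ρ₂ - ρ₁) / 2 * dot (v t x) (grad (φ t) x) * dot (v t x) (v t x))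
      = -2 * ∑ k, ∑ i, ∫ x, B i k x := by
    have h1 : (∑ k, ∑ i, ∫ x, B i k x)
        = ∑ k, -(1/2) * (∫ x, fderiv ℝ (fun y => rhoAff ρ₁ ρ₂ (φ t y) * v t y k) x (Pi.single k 1)
          * dot (v t x) (v t x)) := by
      refine Finset.sum_congr rfl fun k _ => ?_
      rw [hBk k, hibpk k]; ring
    rw [h1, ← Finset.mul_sum, hsumk]; ring
  -- Step gamma: the flux term (pointwise)
  have hpt3 : ∀ x, (ρ₂ - ρ₁) / 2 * dot (fun k => -(M (φ t x) * grad (μ t) x k))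
        (grad (fun y => dot (v t y) (v t y)) x)
      = ∑ k, ∑ i, 2 * C i k x := by
    intro x
    have h1 : grad (fun y => dot (v t y) (v t y)) x
        = fun k => ∑ i, 2 * v t x i * jac (v t) x i k := funext fun k => hgradq2 x k
    rw [h1]
    simp only [dot, hCdef, Finset.mul_sum]
    exact Finset.sum_congr rfl fun k _ => Finset.sum_congr rfl fun i _ => by ring
  have hI3 : (∫ x, (ρ₂ - ρ₁) / 2 * dot (fun k => -(M (φ t x) * grad (μ t) x k))
        (grad (fun y => dot (v t y) (v t y)) x))
      = 2 * ∑ k, ∑ i, ∫ x, C i k x := by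
    rw [show (fun x => (ρ₂ - ρ₁) / 2 * dot (fun k => -(M (φ t x) * grad (μ t) x k))
          (grad (fun y => dot (v t y) (v t y)) x))
        = fun x => ∑ k, ∑ i, 2 * C i k x from funext hpt3,
      integral_finset_sum _ (fun k _ => integrable_finset_sum _ fun i _ => (hIC i k).const_mul 2),
      Finset.sum_congr rfl fun k _ => integral_finset_sum _ (fun i _ => (hIC i k).const_mul 2)]
    simp only [integral_const_mul]
    simp only [← Finset.mul_sum]
  -- Step delta: the viscous term
  have hIdS : ∀ i k, Integrable (fun x => fderiv ℝ (fun y => v t y i) x (Pi.single k 1)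
      * (2 * η (φ t x) * symGrad (v t) x i k)) := fun i k =>
    aux_integrable hK ((aux_fderiv_apply_contDiff (hVi i) (Pi.single k 1)).continuous.mul
      (hSs i k).continuous) (fun x hx => by rw [hS0 i k x hx, mul_zero])
  have hDik : ∀ i k, (∫ x, D i k x) = - ∫ x, fderiv ℝ (fun y => v t y i) x (Pi.single k 1)
      * (2 * η (φ t x) * symGrad (v t) x i k) := by
    intro i k
    have h1 : (∫ x, D i k x) = ∫ x, v t x i
        * fderiv ℝ (fun y => 2 * η (φ t y) * symGrad (v t) y i k) x (Pi.single k 1) := by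
      congr 1; funext x; simp only [hDdef]; ring
    rw [h1]
    exact aux_ibp hK (hVi i) (hSs i k) (hVi0 i) (Pi.single k 1)
  have hpt4 : ∀ x, (2 : ℝ) * η (φ t x) * frob (symGrad (v t) x) (symGrad (v t) x)
      = ∑ i, ∑ k, fderiv ℝ (fun y => v t y i) x (Pi.single k 1)
        * (2 * η (φ t x) * symGrad (v t) x i k) := by
    intro x
    have hkey : ∑ i, ∑ k, (symGrad (v t) x i k * jac (v t) x i k
        - symGrad (v t) x i k * symGrad (v t) x i k) = 0 := by
      apply aux_sum_antisymm
      intro i k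
      simp only [symGrad, Matrix.of_apply]
      ring
    simp only [Finset.sum_sub_distrib] at hkey
    have h2 : ∀ i k, fderiv ℝ (fun y => v t y i) x (Pi.single k 1)
        * (2 * η (φ t x) * symGrad (v t) x i k)
        = 2 * η (φ t x) * (symGrad (v t) x i k * jac (v t) x i k) := by
      intro i k; rw [← hjac]; ring
    rw [Finset.sum_congr rfl fun i (_ : i ∈ Finset.univ) =>
      Finset.sum_congr rfl fun k (_ : k ∈ Finset.univ) => h2 i k]
    simp only [← Finset.mul_sum]
    congr 1
    simp only [frob]
    linarith [hkey]
  have hI4 : (∫ x, 2 * η (φ t x) * frob (symGrad (v t) x) (symGrad (v t) x))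
      = - ∑ i, ∑ k, ∫ x, D i k x := by
    rw [show (fun x => 2 * η (φ t x) * frob (symGrad (v t) x) (symGrad (v t) x))
        = fun x => ∑ i, ∑ k, fderiv ℝ (fun y => v t y i) x (Pi.single k 1)
          * (2 * η (φ t x) * symGrad (v t) x i k) from funext hpt4,
      integral_finset_sum _ (fun i _ => integrable_finset_sum _ fun k _ => hIdS i k),
      Finset.sum_congr rfl fun i (_ : i ∈ Finset.univ) =>
        integral_finset_sum _ (fun k _ => hIdS i k),
      Finset.sum_congr rfl fun i (_ : i ∈ Finset.univ) =>
        Finset.sum_congr rfl fun k (_ : k ∈ Finset.univ) =>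
          (by linarith [hDik i k] :
            (∫ x, fderiv ℝ (fun y => v t y i) x (Pi.single k 1)
              * (2 * η (φ t x) * symGrad (v t) x i k)) = -(∫ x, D i k x))]
    simp [Finset.sum_neg_distrib]
  -- Step epsilon: the pressure term
  have hp0 : ∀ x ∉ K, p t x = 0 := fun x hx => (hsupp t x hx).2.1
  have hIvp : ∀ i : Fin d, Integrable (fun x =>
      fderiv ℝ (fun y => v t y i) x (Pi.single i 1) * p t x) := fun i =>
    aux_integrable hK ((aux_fderiv_apply_contDiff (hVi i) (Pi.single i 1)).continuous.mul
      hps.continuous) (fun x hx => by rw [hp0 x hx, mul_zero])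
  have hE0 : (∑ i, ∫ x, E i x) = 0 := by
    have h1 : ∀ i, (∫ x, E i x)
        = - ∫ x, fderiv ℝ (fun y => v t y i) x (Pi.single i 1) * p t x := by
      intro i
      have h2 : (∫ x, E i x) = ∫ x, v t x i * fderiv ℝ (p t) x (Pi.single i 1) := by
        congr 1; funext x; simp only [hEdef, grad]; ring
      rw [h2]; exact aux_ibp hK (hVi i) hps (hVi0 i) _
    rw [Finset.sum_congr rfl fun i (_ : i ∈ Finset.univ) => h1 i, Finset.sum_neg_distrib,
      ← integral_finset_sum _ (fun i _ => hIvp i)]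
    have hz : (fun x => ∑ i, fderiv ℝ (fun y => v t y i) x (Pi.single i 1) * p t x)
        = fun _ => (0 : ℝ) := by
      funext x
      rw [← Finset.sum_mul]
      have hdv : (∑ i, fderiv ℝ (fun y => v t y i) x (Pi.single i 1)) = divg (v t) x := by
        rw [Finset.sum_congr rfl fun i (_ : i ∈ Finset.univ) => (hjac x i i).symm]
        simp [jac, divg]
      rw [hdv, hdiv t x, zero_mul]
    rw [hz, integral_zero, neg_zero]
  -- Step zeta: the right-hand side
  have hF0 : (∫ x, μ t x * dot (v t x) (grad (φ t) x)) = ∑ i, ∫ x, G i x := by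
    rw [← integral_finset_sum _ (fun i _ => hIG i)]
    congr 1; funext x
    simp only [dot, hGdef, Finset.mul_sum]
    exact Finset.sum_congr rfl fun i _ => by ring
  -- Final assembly
  rw [hI1, hI2, hI3, hI4, hF0,
    Finset.sum_congr rfl fun i (_ : i ∈ Finset.univ) => hsplit i,
    Finset.sum_add_distrib, Finset.sum_sub_distrib, Finset.sum_add_distrib,
    Finset.sum_add_distrib, hE0]
  have hcB : (∑ i, ∑ k, ∫ x, B i k x) = ∑ k, ∑ i, ∫ x, B i k x := Finset.sum_comm
  have hcC : (∑ k, ∑ i, ∫ x, C i k x) = ∑ i, ∑ k, ∫ x, C i k x := Finset.sum_comm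
  linarith [hcB, hcC]
end
end

section
/- Let d ≥ 1. Suppose v : ℝ^d × (0,T) → ℝ^d and φ, μ : ℝ^d × (0,T) → ℝ are smooth, supported for every t in a fixed compact set K ⊂ ℝ^d, and satisfy pointwise ∂ₜφ + ⟨v,∇φ⟩ − div(M(φ)∇μ) = 0 and μ = −Δφ + F′(φ). Then for every t ∈ (0,T): (1/2) d/dt ∫_{ℝ^d} |∇φ|² + d/dt ∫_{ℝ^d} F(φ) + ∫_{ℝ^d} M(φ)|∇μ|² = −∫_{ℝ^d} μ⟨v,∇φ⟩. -/
open MeasureTheory Set Matrix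

noncomputable section

section CalcHelpers
variable {E : Type*} [NormedAddCommGroup E] [NormedSpace ℝ E]

lemma myContDiff_fderiv_apply {f : E → ℝ} (hf : ContDiff ℝ (⊤ : ℕ∞) f) (w : E) :
    ContDiff ℝ (⊤ : ℕ∞) fun x => fderiv ℝ f x w :=
  ((contDiff_infty_iff_fderiv.1 hf).2).clm_apply contDiff_const

lemma my_fderiv_swap {f : E → ℝ} (hf : ContDiff ℝ (⊤ : ℕ∞) f) (q u w : E) :
    fderiv ℝ (fun x => fderiv ℝ f x w) q u = fderiv ℝ (fun x => fderiv ℝ f x u) q w := by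
  have hd : ∀ y, HasFDerivAt f (fderiv ℝ f y) y :=
    fun y => ((contDiff_infty_iff_fderiv.1 hf).1 y).hasFDerivAt
  have h2 : HasFDerivAt (fderiv ℝ f) (fderiv ℝ (fderiv ℝ f) q) q :=
    (((contDiff_infty_iff_fderiv.1 (contDiff_infty_iff_fderiv.1 hf).2).1) q).hasFDerivAt
  have key := second_derivative_symmetric hd h2
  have e : ∀ a : E, fderiv ℝ (fun x => fderiv ℝ f x a) q
      = (ContinuousLinearMap.apply ℝ ℝ a).comp (fderiv ℝ (fderiv ℝ f) q) := by
    intro a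
    exact (((ContinuousLinearMap.apply ℝ ℝ a).hasFDerivAt).comp q h2).fderiv
  rw [e, e]
  exact key u w

lemma my_hasDerivAt_slice {f : ℝ × E → ℝ} {t : ℝ} {x : E}
    (hf : DifferentiableAt ℝ f (t, x)) :
    HasDerivAt (fun s => f (s, x)) (fderiv ℝ f (t, x) (1, 0)) t := by
  have h1 : HasFDerivAt (fun s : ℝ => (s, x))
      ((ContinuousLinearMap.id ℝ ℝ).prod (0 : ℝ →L[ℝ] E)) t :=
    (hasFDerivAt_id t).prodMk (hasFDerivAt_const x t)
  have h2 : HasFDerivAt (fun s : ℝ => f (s, x))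
      ((fderiv ℝ f (t, x)).comp ((ContinuousLinearMap.id ℝ ℝ).prod (0 : ℝ →L[ℝ] E))) t :=
    hf.hasFDerivAt.comp t h1
  simpa using h2.hasDerivAt

lemma my_fderiv_slice {f : ℝ × E → ℝ} {t : ℝ} {x : E}
    (hf : DifferentiableAt ℝ f (t, x)) (w : E) :
    fderiv ℝ (fun y => f (t, y)) x w = fderiv ℝ f (t, x) (0, w) := by
  have h1 : HasFDerivAt (fun y : E => (t, y))
      ((0 : E →L[ℝ] ℝ).prod (ContinuousLinearMap.id ℝ E)) x :=
    (hasFDerivAt_const t x).prodMk (hasFDerivAt_id x)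
  have h2 : HasFDerivAt (fun y => f (t, y))
      ((fderiv ℝ f (t, x)).comp ((0 : E →L[ℝ] ℝ).prod (ContinuousLinearMap.id ℝ E))) x :=
    hf.hasFDerivAt.comp x h1
  rw [h2.fderiv]
  rfl

lemma my_contDiff_slice {f : ℝ × E → ℝ} (hf : ContDiff ℝ (⊤ : ℕ∞) f) (t : ℝ) :
    ContDiff ℝ (⊤ : ℕ∞) fun y => f (t, y) :=
  hf.comp (contDiff_const.prodMk contDiff_id)

lemma my_fderiv_zero_off {X : Type*} [NormedAddCommGroup X] [NormedSpace ℝ X]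
    {f : X → ℝ} {U : Set X} (hU : IsOpen U) (h : ∀ x ∈ U, f x = 0) {x : X} (hx : x ∈ U) :
    fderiv ℝ f x = 0 := by
  have hev : f =ᶠ[nhds x] (fun _ => (0 : ℝ)) :=
    Filter.eventually_of_mem (hU.mem_nhds hx) h
  rw [hev.fderiv_eq]
  exact fderiv_const_apply 0

end CalcHelpers

section MeasHelpers
variable {d : ℕ} {K : Set (Fin d → ℝ)}

lemma my_integrable_supp (hK : IsCompact K) {f : (Fin d → ℝ) → ℝ}
    (hf : Continuous f) (h0 : ∀ x ∉ K, f x = 0) : Integrable f :=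
  hf.integrable_of_hasCompactSupport (HasCompactSupport.intro hK h0)

lemma my_ibp (hK : IsCompact K) {f g : (Fin d → ℝ) → ℝ}
    (hf : ContDiff ℝ (⊤ : ℕ∞) f) (hg : ContDiff ℝ (⊤ : ℕ∞) g)
    (h0 : ∀ x ∉ K, f x = 0) (w : Fin d → ℝ) :
    ∫ x, f x * fderiv ℝ g x w = - ∫ x, fderiv ℝ f x w * g x := by
  have hUo : IsOpen Kᶜ := hK.isClosed.isOpen_compl
  have hf0' : ∀ x ∉ K, fderiv ℝ f x w = 0 := by
    intro x hx
    rw [my_fderiv_zero_off hUo (fun y hy => h0 y hy) hx]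
    rfl
  apply integral_mul_fderiv_eq_neg_fderiv_mul_of_integrable
  · exact my_integrable_supp hK ((myContDiff_fderiv_apply hf w).continuous.mul hg.continuous)
      (fun x hx => by rw [hf0' x hx, zero_mul])
  · exact my_integrable_supp hK (hf.continuous.mul (myContDiff_fderiv_apply hg w).continuous)
      (fun x hx => by rw [h0 x hx, zero_mul])
  · exact my_integrable_supp hK (hf.continuous.mul hg.continuous)
      (fun x hx => by rw [h0 x hx, zero_mul])
  · exact fun x _ => (contDiff_infty_iff_fderiv.1 hf).1 x
  · exact fun x _ => (contDiff_infty_iff_fderiv.1 hg).1 x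

lemma my_hasDerivAt_integral (hK : IsCompact K) {H : ℝ × (Fin d → ℝ) → ℝ}
    (hH : ContDiff ℝ (⊤ : ℕ∞) H) (h0 : ∀ t x, x ∉ K → H (t, x) = 0) (t₀ : ℝ) :
    HasDerivAt (fun s => ∫ x, H (s, x)) (∫ x, fderiv ℝ H (t₀, x) (1, 0)) t₀ := by
  have hUo : IsOpen {q : ℝ × (Fin d → ℝ) | q.2 ∉ K} :=
    (hK.isClosed.isOpen_compl).preimage continuous_snd
  have hdt : ∀ q : ℝ × (Fin d → ℝ), q.2 ∉ K → fderiv ℝ H q (1, 0) = 0 := by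
    intro q hq
    rw [my_fderiv_zero_off hUo (fun p hp => h0 p.1 p.2 hp) hq]
    rfl
  have hDcont : Continuous fun q : ℝ × (Fin d → ℝ) => fderiv ℝ H q (1, 0) :=
    (myContDiff_fderiv_apply hH (1, 0)).continuous
  obtain ⟨C, hC⟩ := ((isCompact_Icc (a := t₀ - 1) (b := t₀ + 1)).prod hK).exists_bound_of_continuousOn
    hDcont.continuousOn
  refine (hasDerivAt_integral_of_dominated_loc_of_deriv_le (μ := volume)
      (F := fun s x => H (s, x)) (F' := fun s x => fderiv ℝ H (s, x) (1, 0))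
      (x₀ := t₀) (s := Metric.ball t₀ 1) (bound := K.indicator fun _ => ‖C‖) (Metric.ball_mem_nhds t₀ one_pos)
      (Filter.Eventually.of_forall fun s =>
        ((hH.continuous.comp (continuous_const.prodMk continuous_id)).aestronglyMeasurable))
      (my_integrable_supp hK (hH.continuous.comp (continuous_const.prodMk continuous_id))
        (h0 t₀))
      ((hDcont.comp (continuous_const.prodMk continuous_id)).aestronglyMeasurable)
      (Filter.Eventually.of_forall fun x s hs => ?_)
      ((integrable_indicator_iff hK.measurableSet).2
        (integrableOn_const hK.measure_lt_top.ne))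
      (Filter.Eventually.of_forall fun x s hs =>
        my_hasDerivAt_slice ((hH.differentiable (by simp)) (s, x)))).2
  by_cases hx : x ∈ K
  · rw [Set.indicator_of_mem hx]
    have hs' : (s, x) ∈ Set.Icc (t₀ - 1) (t₀ + 1) ×ˢ K := by
      refine ⟨?_, hx⟩
      have hd := Metric.mem_ball.1 hs
      rw [Real.dist_eq] at hd
      constructor <;> [linarith [abs_le.1 hd.le] ; linarith [abs_le.1 hd.le]]
    exact (hC (s, x) hs').trans (le_abs_self C)
  · rw [Set.indicator_of_notMem hx]
    simp only [hdt (s, x) hx, norm_zero, le_refl]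
end MeasHelpers

section Energy
variable {d : ℕ} {K : Set (Fin d → ℝ)}

lemma my_F_energy (hK : IsCompact K) {Φ : ℝ × (Fin d → ℝ) → ℝ}
    (hΦ : ContDiff ℝ (⊤ : ℕ∞) Φ) (h0 : ∀ t x, x ∉ K → Φ (t, x) = 0)
    {F : ℝ → ℝ} (hF : ContDiff ℝ (⊤ : ℕ∞) F) (hF0 : F 0 = 0) (t : ℝ) :
    HasDerivAt (fun s => ∫ x, F (Φ (s, x)))
      (∫ x, deriv F (Φ (t, x)) * fderiv ℝ Φ (t, x) (1, 0)) t := by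
  have hFd : ∀ a u : ℝ, fderiv ℝ F a u = u * deriv F a := by
    intro a u
    have h := (fderiv ℝ F a).map_smul u (1 : ℝ)
    simpa [fderiv_apply_one_eq_deriv] using h
  have hΦd : Differentiable ℝ Φ := hΦ.differentiable (by simp)
  have hcomp : ContDiff ℝ (⊤ : ℕ∞) fun q : ℝ × (Fin d → ℝ) => F (Φ q) := hF.comp hΦ
  have base := my_hasDerivAt_integral hK hcomp
    (fun s x hx => by rw [h0 s x hx, hF0]) t
  have key : ∀ x, fderiv ℝ (fun q : ℝ × (Fin d → ℝ) => F (Φ q)) (t, x) (1, 0)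
      = deriv F (Φ (t, x)) * fderiv ℝ Φ (t, x) (1, 0) := by
    intro x
    have hc : fderiv ℝ (F ∘ Φ) (t, x)
        = (fderiv ℝ F (Φ (t, x))).comp (fderiv ℝ Φ (t, x)) :=
      fderiv_comp (t, x) ((hF.differentiable (by simp)).differentiableAt)
        (hΦd (t, x))
    have : fderiv ℝ (fun q : ℝ × (Fin d → ℝ) => F (Φ q)) (t, x) (1, 0)
        = fderiv ℝ F (Φ (t, x)) (fderiv ℝ Φ (t, x) (1, 0)) := by
      rw [show (fun q : ℝ × (Fin d → ℝ) => F (Φ q)) = F ∘ Φ from rfl, hc]; rfl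
    rw [this, hFd, mul_comm]
  have : (∫ x, fderiv ℝ (fun q : ℝ × (Fin d → ℝ) => F (Φ q)) (t, x) (1, 0))
      = ∫ x, deriv F (Φ (t, x)) * fderiv ℝ Φ (t, x) (1, 0) :=
    integral_congr_ae (Filter.Eventually.of_forall key)
  exact this ▸ base

end Energy

section Dirichlet
variable {d : ℕ} {K : Set (Fin d → ℝ)}

lemma my_zero_off_prod (hK : IsCompact K) {f : ℝ × (Fin d → ℝ) → ℝ}
    (h0 : ∀ t x, x ∉ K → f (t, x) = 0) {s : ℝ} {x : Fin d → ℝ} (hx : x ∉ K)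
    (w : ℝ × (Fin d → ℝ)) : fderiv ℝ f (s, x) w = 0 := by
  have hUo : IsOpen {q : ℝ × (Fin d → ℝ) | q.2 ∉ K} :=
    (hK.isClosed.isOpen_compl).preimage continuous_snd
  rw [my_fderiv_zero_off hUo (fun p hp => h0 p.1 p.2 hp) (by exact hx : ((s,x) : ℝ × (Fin d → ℝ)).2 ∉ K)]
  rfl

lemma my_dirichlet (hK : IsCompact K) {Φ : ℝ × (Fin d → ℝ) → ℝ}
    (hΦ : ContDiff ℝ (⊤ : ℕ∞) Φ) (h0 : ∀ t x, x ∉ K → Φ (t, x) = 0) (t : ℝ) :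
    HasDerivAt (fun s => ∫ x, ∑ i,
        fderiv ℝ Φ (s, x) (0, Pi.single i 1) * fderiv ℝ Φ (s, x) (0, Pi.single i 1))
      (-2 * ∫ x, lap (fun y => Φ (t, y)) x * fderiv ℝ Φ (t, x) (1, 0)) t := by
  have hΦd : Differentiable ℝ Φ := hΦ.differentiable (by simp)
  have hP : ∀ w : ℝ × (Fin d → ℝ), ContDiff ℝ (⊤ : ℕ∞) fun q => fderiv ℝ Φ q w :=
    fun w => myContDiff_fderiv_apply hΦ w
  have hPd : ∀ (w q : ℝ × (Fin d → ℝ)), DifferentiableAt ℝ (fun p => fderiv ℝ Φ p w) q :=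
    fun w q => ((hP w).differentiable (by simp)) q
  have hW : ContDiff ℝ (⊤ : ℕ∞) fun q : ℝ × (Fin d → ℝ) =>
      ∑ i, fderiv ℝ Φ q (0, Pi.single i 1) * fderiv ℝ Φ q (0, Pi.single i 1) :=
    ContDiff.sum fun i _ => (hP _).mul (hP _)
  have hW0 : ∀ s x, x ∉ K → (∑ i,
      fderiv ℝ Φ (s, x) (0, Pi.single i 1) * fderiv ℝ Φ (s, x) (0, Pi.single i 1)) = 0 := by
    intro s x hx
    refine Finset.sum_eq_zero fun i _ => ?_
    rw [my_zero_off_prod hK h0 hx, zero_mul]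
  have base := my_hasDerivAt_integral hK hW (fun s x hx => hW0 s x hx) t
  -- pointwise identity for the time derivative of the integrand
  have hptw : ∀ q : ℝ × (Fin d → ℝ),
      fderiv ℝ (fun p => ∑ i, fderiv ℝ Φ p (0, Pi.single i 1) * fderiv ℝ Φ p (0, Pi.single i 1))
        q (1, 0)
      = ∑ i, 2 * (fderiv ℝ Φ q (0, Pi.single i 1)
          * fderiv ℝ (fun p => fderiv ℝ Φ p (1, 0)) q (0, Pi.single i 1)) := by
    intro q
    rw [fderiv_fun_sum (A := fun i p => fderiv ℝ Φ p (0, Pi.single i 1) * fderiv ℝ Φ p (0, Pi.single i 1)) (fun i _ => (hPd _ q).mul (hPd _ q)), ContinuousLinearMap.sum_apply]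
    refine Finset.sum_congr rfl fun i _ => ?_
    rw [fderiv_fun_mul (hPd _ q) (hPd _ q)]
    simp only [ContinuousLinearMap.add_apply, ContinuousLinearMap.smul_apply, smul_eq_mul]
    rw [my_fderiv_swap hΦ q (1, 0) (0, Pi.single i 1)]
    ring
  have hval : (∫ x, fderiv ℝ
        (fun p => ∑ i, fderiv ℝ Φ p (0, Pi.single i 1) * fderiv ℝ Φ p (0, Pi.single i 1))
        (t, x) (1, 0))
      = -2 * ∫ x, lap (fun y => Φ (t, y)) x * fderiv ℝ Φ (t, x) (1, 0) := by
    have hGt : ContDiff ℝ (⊤ : ℕ∞) fun y => fderiv ℝ Φ (t, y) (1, 0) :=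
      my_contDiff_slice (hP (1, 0)) t
    have hPt : ∀ i : Fin d, ContDiff ℝ (⊤ : ℕ∞) fun y => fderiv ℝ Φ (t, y) (0, Pi.single i 1) :=
      fun i => my_contDiff_slice (hP _) t
    calc (∫ x, fderiv ℝ
          (fun p => ∑ i, fderiv ℝ Φ p (0, Pi.single i 1) * fderiv ℝ Φ p (0, Pi.single i 1))
          (t, x) (1, 0))
        = ∫ x, ∑ i, 2 * (fderiv ℝ Φ (t, x) (0, Pi.single i 1)
            * fderiv ℝ (fun y => fderiv ℝ Φ (t, y) (1, 0)) x (Pi.single i 1)) := by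
          refine integral_congr_ae (Filter.Eventually.of_forall fun x => ?_)
          beta_reduce
          rw [hptw (t, x)]
          refine Finset.sum_congr rfl fun i _ => ?_
          rw [my_fderiv_slice (hPd (1, 0) (t, x)) (Pi.single i 1)]
      _ = ∑ i, ∫ x, 2 * (fderiv ℝ Φ (t, x) (0, Pi.single i 1)
            * fderiv ℝ (fun y => fderiv ℝ Φ (t, y) (1, 0)) x (Pi.single i 1)) := by
          refine integral_finset_sum _ fun i _ => ?_
          refine my_integrable_supp hK ?_ ?_
          · exact continuous_const.mul (((hPt i).continuous).mul
              ((myContDiff_fderiv_apply hGt (Pi.single i 1)).continuous))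
          · intro x hx
            rw [my_zero_off_prod hK h0 hx, zero_mul, mul_zero]
      _ = ∑ i, 2 * ∫ x, (fun y => fderiv ℝ Φ (t, y) (0, Pi.single i 1)) x
            * fderiv ℝ (fun y => fderiv ℝ Φ (t, y) (1, 0)) x (Pi.single i 1) := by
          refine Finset.sum_congr rfl fun i _ => ?_
          exact integral_const_mul 2 _
      _ = ∑ i, 2 * (- ∫ x, fderiv ℝ (fun y => fderiv ℝ Φ (t, y) (0, Pi.single i 1)) x
            (Pi.single i 1) * fderiv ℝ Φ (t, x) (1, 0)) := by
          refine Finset.sum_congr rfl fun i _ => ?_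
          congr 1
          exact my_ibp hK (hPt i) hGt (fun x hx => my_zero_off_prod hK h0 hx _) (Pi.single i 1)
      _ = -2 * ∑ i, ∫ x, fderiv ℝ (fun y => fderiv ℝ Φ (t, y) (0, Pi.single i 1)) x
            (Pi.single i 1) * fderiv ℝ Φ (t, x) (1, 0) := by
          rw [Finset.mul_sum]
          refine Finset.sum_congr rfl fun i _ => ?_
          ring
      _ = -2 * ∫ x, ∑ i, fderiv ℝ (fun y => fderiv ℝ Φ (t, y) (0, Pi.single i 1)) x
            (Pi.single i 1) * fderiv ℝ Φ (t, x) (1, 0) := by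
          congr 1
          refine (integral_finset_sum _ fun i _ => ?_).symm
          refine my_integrable_supp hK ?_ ?_
          · exact ((myContDiff_fderiv_apply (hPt i) (Pi.single i 1)).continuous).mul
              ((hP (1, 0)).continuous.comp (continuous_const.prodMk continuous_id))
          · intro x hx
            rw [my_zero_off_prod hK h0 hx, mul_zero]
      _ = -2 * ∫ x, lap (fun y => Φ (t, y)) x * fderiv ℝ Φ (t, x) (1, 0) := by
          have hlapeq : ∀ x : Fin d → ℝ,
              (∑ i, fderiv ℝ (fun y => fderiv ℝ Φ (t, y) (0, Pi.single i 1)) x (Pi.single i 1))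
              = lap (fun y => Φ (t, y)) x := by
            intro x
            unfold lap
            refine Finset.sum_congr rfl fun i _ => ?_
            rw [show (fun y => fderiv ℝ (fun z => Φ (t, z)) y (Pi.single i 1))
                = fun y => fderiv ℝ Φ (t, y) (0, Pi.single i 1) from
              funext fun y => my_fderiv_slice (hΦd (t, y)) _]
          congr 1
          refine integral_congr_ae (Filter.Eventually.of_forall fun x => ?_)
          beta_reduce
          rw [← Finset.sum_mul, hlapeq x]
  exact hval ▸ base

end Dirichlet

section LapEq
variable {d : ℕ}

lemma my_lap_eq {Φ : ℝ × (Fin d → ℝ) → ℝ} (hΦd : Differentiable ℝ Φ) (t : ℝ)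
    (x : Fin d → ℝ) :
    lap (fun y => Φ (t, y)) x
      = ∑ i, fderiv ℝ (fun y => fderiv ℝ Φ (t, y) (0, Pi.single i 1)) x (Pi.single i 1) := by
  unfold lap
  refine Finset.sum_congr rfl fun i _ => ?_
  rw [show (fun y => fderiv ℝ (fun z => Φ (t, z)) y (Pi.single i 1))
      = fun y => fderiv ℝ Φ (t, y) (0, Pi.single i 1) from
    funext fun y => my_fderiv_slice (hΦd (t, y)) _]

end LapEq


/-- Identity (2.2b): testing the phase-field equation with `μ` and the
chemical-potential equation with `∂ₜφ`. -/
theorem phasefield_tested_with_mu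
    {d : ℕ} (hd : 1 ≤ d) {T : ℝ} (hT : 0 < T)
    (M F : ℝ → ℝ)
    (hM : ContDiff ℝ (⊤ : ℕ∞) M) (hF : ContDiff ℝ (⊤ : ℕ∞) F)
    (hMnn : ∀ s, 0 ≤ M s) (hF0 : F 0 = 0) (hF'0 : deriv F 0 = 0)
    (v : ℝ → (Fin d → ℝ) → Fin d → ℝ) (φ μ : ℝ → (Fin d → ℝ) → ℝ)
    (hv : ContDiff ℝ (⊤ : ℕ∞) fun q : ℝ × (Fin d → ℝ) => v q.1 q.2)
    (hφ : ContDiff ℝ (⊤ : ℕ∞) fun q : ℝ × (Fin d → ℝ) => φ q.1 q.2)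
    (hμ : ContDiff ℝ (⊤ : ℕ∞) fun q : ℝ × (Fin d → ℝ) => μ q.1 q.2)
    {K : Set (Fin d → ℝ)} (hK : IsCompact K)
    (hsupp : ∀ t, ∀ x ∉ K, v t x = 0 ∧ φ t x = 0 ∧ μ t x = 0)
    -- phase-field equation: ∂ₜφ + ⟨v,∇φ⟩ − div(M(φ)∇μ) = 0
    (hph : ∀ t ∈ Ioo (0:ℝ) T, ∀ x,
      deriv (fun s => φ s x) t + dot (v t x) (grad (φ t) x)
        - (∑ k, fderiv ℝ (fun y => M (φ t y) * grad (μ t) y k) x (Pi.single k 1)) = 0)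
    -- chemical potential: μ = −Δφ + F′(φ)
    (hchem : ∀ t ∈ Ioo (0:ℝ) T, ∀ x, μ t x = - lap (φ t) x + deriv F (φ t x)) :
    ∀ t ∈ Ioo (0:ℝ) T,
      (1/2) * deriv (fun s => ∫ x, dot (grad (φ s) x) (grad (φ s) x)) t
        + deriv (fun s => ∫ x, F (φ s x)) t
        + (∫ x, M (φ t x) * dot (grad (μ t) x) (grad (μ t) x))
      = -∫ x, μ t x * dot (v t x) (grad (φ t) x) := by
  intro t ht
  have hΦd : Differentiable ℝ (fun q : ℝ × (Fin d → ℝ) => φ q.1 q.2) :=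
    hφ.differentiable (by simp)
  have hφ0 : ∀ s x, x ∉ K → φ s x = 0 := fun s x hx => (hsupp s x hx).2.1
  have hμ0 : ∀ s x, x ∉ K → μ s x = 0 := fun s x hx => (hsupp s x hx).2.2
  have hφt : ContDiff ℝ (⊤ : ℕ∞) (φ t) := my_contDiff_slice hφ t
  have hμt : ContDiff ℝ (⊤ : ℕ∞) (μ t) := my_contDiff_slice hμ t
  have hgrad : ∀ (s : ℝ) (x : Fin d → ℝ) (i : Fin d),
      grad (φ s) x i = fderiv ℝ (fun q : ℝ × (Fin d → ℝ) => φ q.1 q.2) (s, x)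
        (0, Pi.single i 1) :=
    fun s x i => my_fderiv_slice (hΦd (s, x)) _
  have hdtx : ∀ x, deriv (fun s => φ s x) t
      = fderiv ℝ (fun q : ℝ × (Fin d → ℝ) => φ q.1 q.2) (t, x) (1, 0) :=
    fun x => (my_hasDerivAt_slice (hΦd (t, x))).deriv
  -- continuity facts
  have hGc : Continuous fun x =>
      fderiv ℝ (fun q : ℝ × (Fin d → ℝ) => φ q.1 q.2) (t, x) (1, 0) :=
    (my_contDiff_slice (myContDiff_fderiv_apply hφ (1, 0)) t).continuous
  have hG0 : ∀ x ∉ K, fderiv ℝ (fun q : ℝ × (Fin d → ℝ) => φ q.1 q.2) (t, x) (1, 0) = 0 :=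
    fun x hx => my_zero_off_prod hK (fun s y hy => hφ0 s y hy) hx _
  have hlapr : ∀ x, lap (φ t) x = ∑ i,
      fderiv ℝ (fun y => fderiv ℝ (fun q : ℝ × (Fin d → ℝ) => φ q.1 q.2) (t, y)
        (0, Pi.single i 1)) x (Pi.single i 1) := fun x => my_lap_eq hΦd t x
  have hlapc : Continuous (lap (φ t)) := by
    rw [show lap (φ t) = fun x => ∑ i,
        fderiv ℝ (fun y => fderiv ℝ (fun q : ℝ × (Fin d → ℝ) => φ q.1 q.2) (t, y)
          (0, Pi.single i 1)) x (Pi.single i 1) from funext hlapr]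
    exact continuous_finset_sum _ fun i _ =>
      (myContDiff_fderiv_apply
        (my_contDiff_slice (myContDiff_fderiv_apply hφ (0, Pi.single i 1)) t)
        (Pi.single i 1)).continuous
  have hvc : Continuous fun x => v t x :=
    hv.continuous.comp (continuous_const.prodMk continuous_id)
  have hdotc : Continuous fun x => dot (v t x) (grad (φ t) x) := by
    rw [show (fun x => dot (v t x) (grad (φ t) x)) = fun x => ∑ i, v t x i *
        fderiv ℝ (fun q : ℝ × (Fin d → ℝ) => φ q.1 q.2) (t, x) (0, Pi.single i 1) from
      funext fun x => Finset.sum_congr rfl fun i _ => by rw [hgrad t x i]]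
    exact continuous_finset_sum _ fun i _ =>
      ((continuous_apply i).comp hvc).mul
        ((my_contDiff_slice (myContDiff_fderiv_apply hφ (0, Pi.single i 1)) t).continuous)
  have hgradμc : ∀ k : Fin d, Continuous fun x => grad (μ t) x k := by
    intro k
    exact myContDiff_fderiv_apply hμt (Pi.single k 1) |>.continuous
  have hmk : ∀ k : Fin d, ContDiff ℝ (⊤ : ℕ∞) fun y => M (φ t y) * grad (μ t) y k :=
    fun k => (hM.comp hφt).mul (myContDiff_fderiv_apply hμt (Pi.single k 1))
  -- step 1 : Dirichlet energy
  have e1 : deriv (fun s => ∫ x, dot (grad (φ s) x) (grad (φ s) x)) t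
      = -2 * ∫ x, lap (φ t) x *
          fderiv ℝ (fun q : ℝ × (Fin d → ℝ) => φ q.1 q.2) (t, x) (1, 0) := by
    rw [show (fun s => ∫ x, dot (grad (φ s) x) (grad (φ s) x))
        = fun s => ∫ x, ∑ i,
          fderiv ℝ (fun q : ℝ × (Fin d → ℝ) => φ q.1 q.2) (s, x) (0, Pi.single i 1) *
          fderiv ℝ (fun q : ℝ × (Fin d → ℝ) => φ q.1 q.2) (s, x) (0, Pi.single i 1) from
      funext fun s => integral_congr_ae (Filter.Eventually.of_forall fun x =>
        Finset.sum_congr rfl fun i _ => by rw [hgrad s x i])]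
    exact (my_dirichlet hK hφ (fun s x hx => hφ0 s x hx) t).deriv
  -- step 2 : F energy
  have e2 : deriv (fun s => ∫ x, F (φ s x)) t
      = ∫ x, deriv F (φ t x) *
          fderiv ℝ (fun q : ℝ × (Fin d → ℝ) => φ q.1 q.2) (t, x) (1, 0) :=
    (my_F_energy hK hφ (fun s x hx => hφ0 s x hx) hF hF0 t).deriv
  -- step 3 : chemical potential identity
  have e3 : (∫ x, μ t x *
        fderiv ℝ (fun q : ℝ × (Fin d → ℝ) => φ q.1 q.2) (t, x) (1, 0))
      = (∫ x, deriv F (φ t x) *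
          fderiv ℝ (fun q : ℝ × (Fin d → ℝ) => φ q.1 q.2) (t, x) (1, 0))
        - ∫ x, lap (φ t) x *
          fderiv ℝ (fun q : ℝ × (Fin d → ℝ) => φ q.1 q.2) (t, x) (1, 0) := by
    rw [show (fun x => μ t x *
        fderiv ℝ (fun q : ℝ × (Fin d → ℝ) => φ q.1 q.2) (t, x) (1, 0))
        = fun x => deriv F (φ t x) *
            fderiv ℝ (fun q : ℝ × (Fin d → ℝ) => φ q.1 q.2) (t, x) (1, 0)
          - lap (φ t) x *
            fderiv ℝ (fun q : ℝ × (Fin d → ℝ) => φ q.1 q.2) (t, x) (1, 0) from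
      funext fun x => by beta_reduce; rw [hchem t ht x]; ring]
    refine integral_sub ?_ ?_
    · exact my_integrable_supp hK
        (((hF.continuous_deriv (by exact_mod_cast le_top)).comp hφt.continuous).mul hGc)
        (fun x hx => by rw [hG0 x hx, mul_zero])
    · exact my_integrable_supp hK (hlapc.mul hGc)
        (fun x hx => by rw [hG0 x hx, mul_zero])
  -- step 4 : use the phase-field equation and integrate by parts
  have hphx : ∀ x, fderiv ℝ (fun q : ℝ × (Fin d → ℝ) => φ q.1 q.2) (t, x) (1, 0)
      = (∑ k, fderiv ℝ (fun y => M (φ t y) * grad (μ t) y k) x (Pi.single k 1))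
        - dot (v t x) (grad (φ t) x) := by
    intro x
    have h := hph t ht x
    rw [hdtx x] at h
    linarith
  have e4 : (∫ x, μ t x *
        fderiv ℝ (fun q : ℝ × (Fin d → ℝ) => φ q.1 q.2) (t, x) (1, 0))
      = -(∫ x, M (φ t x) * dot (grad (μ t) x) (grad (μ t) x))
        - ∫ x, μ t x * dot (v t x) (grad (φ t) x) := by
    have intpiece : ∀ k : Fin d, Integrable fun x => μ t x *
        fderiv ℝ (fun y => M (φ t y) * grad (μ t) y k) x (Pi.single k 1) := by
      intro k
      exact my_integrable_supp hK
        (hμt.continuous.mul (myContDiff_fderiv_apply (hmk k) (Pi.single k 1)).continuous)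
        (fun x hx => by rw [hμ0 t x hx, zero_mul])
    calc (∫ x, μ t x *
          fderiv ℝ (fun q : ℝ × (Fin d → ℝ) => φ q.1 q.2) (t, x) (1, 0))
        = ∫ x, (∑ k, μ t x *
              fderiv ℝ (fun y => M (φ t y) * grad (μ t) y k) x (Pi.single k 1))
            - μ t x * dot (v t x) (grad (φ t) x) := by
          refine integral_congr_ae (Filter.Eventually.of_forall fun x => ?_)
          beta_reduce
          rw [hphx x, mul_sub, Finset.mul_sum]
      _ = (∑ k, ∫ x, μ t x *
              fderiv ℝ (fun y => M (φ t y) * grad (μ t) y k) x (Pi.single k 1))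
            - ∫ x, μ t x * dot (v t x) (grad (φ t) x) := by
          rw [integral_sub (f := fun x => ∑ k, μ t x *
              fderiv ℝ (fun y => M (φ t y) * grad (μ t) y k) x (Pi.single k 1))
            (g := fun x => μ t x * dot (v t x) (grad (φ t) x)) (integrable_finset_sum _ fun k _ => intpiece k)
            (my_integrable_supp hK (hμt.continuous.mul hdotc)
              (fun x hx => by rw [hμ0 t x hx, zero_mul]))]
          rw [integral_finset_sum _ fun k _ => intpiece k]
      _ = (∑ k, -∫ x, fderiv ℝ (μ t) x (Pi.single k 1) *
              (M (φ t x) * grad (μ t) x k))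
            - ∫ x, μ t x * dot (v t x) (grad (φ t) x) := by
          congr 1
          refine Finset.sum_congr rfl fun k _ => ?_
          exact my_ibp hK hμt (hmk k) (fun x hx => hμ0 t x hx) (Pi.single k 1)
      _ = -(∫ x, M (φ t x) * dot (grad (μ t) x) (grad (μ t) x))
            - ∫ x, μ t x * dot (v t x) (grad (φ t) x) := by
          have intk : ∀ k : Fin d, Integrable fun x =>
              fderiv ℝ (μ t) x (Pi.single k 1) * (M (φ t x) * grad (μ t) x k) :=
            fun k => my_integrable_supp hK
              (((myContDiff_fderiv_apply hμt (Pi.single k 1)).continuous).mul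
                (((hM.comp hφt).continuous).mul (hgradμc k)))
              (fun x hx => by
                rw [my_fderiv_zero_off hK.isClosed.isOpen_compl
                  (fun y hy => hμ0 t y hy) hx]
                simp)
          congr 1
          rw [Finset.sum_neg_distrib]
          congr 1
          rw [← integral_finset_sum _ (fun k _ => intk k)]
          refine integral_congr_ae (Filter.Eventually.of_forall fun x => ?_)
          show (∑ k, grad (μ t) x k * (M (φ t x) * grad (μ t) x k))
              = M (φ t x) * dot (grad (μ t) x) (grad (μ t) x)
          unfold dot
          rw [Finset.mul_sum]
          exact Finset.sum_congr rfl fun k _ => by ring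
  rw [e1, e2]
  linarith [e3, e4]
end
end

section
/- Let d ≥ 1, let v, w : ℝ^d → ℝ^d be continuously differentiable and compactly supported with div v = 0 everywhere, let φ : ℝ^d → ℝ and R : ℝ → ℝ be continuously differentiable, and set ρ := R∘φ. Then ∫_{ℝ^d} ρ ⟨(v·∇)v, w⟩ = −(1/2)∫_{ℝ^d} R′(φ)⟨v,∇φ⟩⟨v,w⟩ − (1/2)∫_{ℝ^d} ρ ⟨v,(∇w)^T v⟩ + (1/2)∫_{ℝ^d} ρ ⟨v,(∇v)^T w⟩. -/
open MeasureTheory Set Matrix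

noncomputable section

open Function in
/-- The integral of the divergence of a compactly supported `C¹` vector field on `ℝⁿ⁺¹`
vanishes. -/
lemma integral_divergence_zero {n : ℕ} (F : (Fin (n+1) → ℝ) → (Fin (n+1) → ℝ))
    (hF : ContDiff ℝ 1 F) (hs : HasCompactSupport F) :
    ∫ x, ∑ i, fderiv ℝ F x (Pi.single i 1) i = 0 := by
  obtain ⟨r, hr0, hr⟩ := hs.isBounded.subset_closedBall_lt 0 0
  set a : Fin (n+1) → ℝ := fun _ => -(r+1) with ha
  set b : Fin (n+1) → ℝ := fun _ => (r+1) with hb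
  have hle : a ≤ b := fun i => by simp only [ha, hb]; linarith
  have hdf : ∀ x, HasFDerivAt F (fderiv ℝ F x) x := fun x =>
    (hF.differentiable one_ne_zero x).hasFDerivAt
  have hcont : Continuous fun x => ∑ i, fderiv ℝ F x (Pi.single i 1) i :=
    continuous_finset_sum _ fun i _ =>
      (continuous_apply (A := fun _ : Fin (n+1) => ℝ) i).comp
        ((hF.continuous_fderiv one_ne_zero).clm_apply continuous_const)
  have key := integral_divergence_of_hasFDerivAt_off_countable a b hle F (fderiv ℝ F) ∅
    countable_empty hF.continuous.continuousOn (fun x _ => hdf x)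
    (hcont.continuousOn.integrableOn_compact isCompact_Icc)
  have hzero : ∀ c : ℝ, r < |c| → ∀ (i : Fin (n+1)) (y : Fin n → ℝ),
      F (Fin.insertNth (α := fun _ => ℝ) i c y) = 0 := by
    intro c hc i y
    have hy : Fin.insertNth (α := fun _ => ℝ) i c y ∉ Metric.closedBall (0 : Fin (n+1) → ℝ) r := by
      intro hmem
      rw [Metric.mem_closedBall, dist_zero_right] at hmem
      have := norm_le_pi_norm (Fin.insertNth (α := fun _ => ℝ) i c y) i
      rw [Fin.insertNth_apply_same] at this
      simp only [Real.norm_eq_abs] at this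
      linarith
    exact image_eq_zero_of_notMem_tsupport fun h => hy (hr h)
  have hfaces : ∀ i : Fin (n+1),
      ((∫ x in Icc (a ∘ Fin.succAbove i) (b ∘ Fin.succAbove i), F (Fin.insertNth i (b i) x) i) -
        ∫ x in Icc (a ∘ Fin.succAbove i) (b ∘ Fin.succAbove i), F (Fin.insertNth i (a i) x) i)
        = 0 := by
    intro i
    have h1 : ∀ y : Fin n → ℝ, F (Fin.insertNth i (b i) y) = 0 :=
      hzero _ (by show r < |r + 1|; rw [abs_of_pos] <;> linarith) i
    have h2 : ∀ y : Fin n → ℝ, F (Fin.insertNth i (a i) y) = 0 :=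
      hzero _ (by show r < |-(r + 1)|; rw [abs_neg, abs_of_pos] <;> linarith) i
    simp [h1, h2]
  rw [Finset.sum_congr rfl (fun i _ => hfaces i), Finset.sum_const_zero] at key
  rw [← key]
  symm
  apply setIntegral_eq_integral_of_forall_compl_eq_zero
  intro x hx
  have hxball : x ∉ Metric.closedBall (0 : Fin (n+1) → ℝ) r := by
    intro hmem
    rw [Metric.mem_closedBall, dist_zero_right] at hmem
    refine hx ⟨fun i => ?_, fun i => ?_⟩ <;>
    · have := norm_le_pi_norm x i
      simp only [Real.norm_eq_abs] at this
      have := abs_le.mp (this.trans hmem)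
      simp only [ha, hb]
      linarith [this.1, this.2]
  have hnot : x ∉ tsupport F := fun h => hxball (hr h)
  have hfd : fderiv ℝ F x = 0 := by
    by_contra h
    exact hnot (support_fderiv_subset ℝ (Function.mem_support.mpr h))
  simp [hfd]

/-- Integral identity underlying the discretization (2.5) of the convective
term `ρ(v·∇)v` for solenoidal velocity fields. -/
theorem convective_term_identity
    {d : ℕ} (hd : 1 ≤ d)
    (v w : (Fin d → ℝ) → Fin d → ℝ)
    (hv : ContDiff ℝ 1 v) (hw : ContDiff ℝ 1 w)
    (hvsupp : HasCompactSupport v) (hwsupp : HasCompactSupport w)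
    (hdiv : ∀ x, divg v x = 0)
    (φ : (Fin d → ℝ) → ℝ) (R : ℝ → ℝ)
    (hφ : ContDiff ℝ 1 φ) (hR : ContDiff ℝ 1 R) :
    (∫ x, R (φ x) * dot (Matrix.mulVec (jac v x) (v x)) (w x))
      = -(1/2) * (∫ x, deriv R (φ x) * dot (v x) (grad φ x) * dot (v x) (w x))
        - (1/2) * (∫ x, R (φ x) * dot (v x) (Matrix.mulVec (jac w x)ᵀ (v x)))
        + (1/2) * (∫ x, R (φ x) * dot (v x) (Matrix.mulVec (jac v x)ᵀ (w x))) := by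
  obtain ⟨n, rfl⟩ : ∃ n, d = n + 1 := ⟨d - 1, (Nat.succ_pred_eq_of_pos hd).symm⟩
  classical
  -- abbreviations for the three integrands
  set A : (Fin (n+1) → ℝ) → ℝ :=
    fun x => deriv R (φ x) * dot (v x) (grad φ x) * dot (v x) (w x) with hA
  set I : (Fin (n+1) → ℝ) → ℝ :=
    fun x => R (φ x) * dot (Matrix.mulVec (jac v x) (v x)) (w x) with hI
  set B : (Fin (n+1) → ℝ) → ℝ :=
    fun x => R (φ x) * dot (v x) (Matrix.mulVec (jac w x)ᵀ (v x)) with hB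
  -- the vector field `F = ρ ⟨v,w⟩ v`
  set F : (Fin (n+1) → ℝ) → (Fin (n+1) → ℝ) :=
    fun y => (R (φ y) * dot (v y) (w y)) • v y with hF
  have hdotC : ContDiff ℝ 1 (fun y => dot (v y) (w y)) := by
    simp only [dot]
    exact ContDiff.sum fun i _ => (contDiff_pi.mp hv i).mul (contDiff_pi.mp hw i)
  have hgC : ContDiff ℝ 1 (fun y => R (φ y) * dot (v y) (w y)) := (hR.comp hφ).mul hdotC
  have hFC : ContDiff ℝ 1 F := hgC.smul hv
  have hFs : HasCompactSupport F := by
    apply hvsupp.mono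
    intro y hy
    by_contra hvy
    apply hy
    have : v y = 0 := of_not_not (fun h => hvy (Function.mem_support.mpr h))
    simp [hF, this]
  -- pointwise divergence identity
  have hpt : ∀ x, ∑ i, fderiv ℝ F x (Pi.single i 1) i = A x + I x + B x := by
    intro x
    have hvx := (hv.differentiable one_ne_zero x).hasFDerivAt
    have hwx := (hw.differentiable one_ne_zero x).hasFDerivAt
    have hφx := (hφ.differentiable one_ne_zero x).hasFDerivAt
    have hRx : HasDerivAt R (deriv R (φ x)) (φ x) := (hR.differentiable one_ne_zero (φ x)).hasDerivAt
    have hRφ : HasFDerivAt (fun y => R (φ y)) (deriv R (φ x) • fderiv ℝ φ x) x :=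
      hRx.comp_hasFDerivAt x hφx
    have hproj : ∀ (u : (Fin (n+1) → ℝ) → Fin (n+1) → ℝ),
        HasFDerivAt u (fderiv ℝ u x) x → ∀ i : Fin (n+1),
        HasFDerivAt (fun y => u y i)
          ((ContinuousLinearMap.proj i).comp (fderiv ℝ u x)) x := fun u hu i => by
      exact (ContinuousLinearMap.proj i).hasFDerivAt.comp x hu
    have hdotx : HasFDerivAt (fun y => dot (v y) (w y))
        (∑ i, ((v x i) • ((ContinuousLinearMap.proj i).comp (fderiv ℝ w x))
            + (w x i) • ((ContinuousLinearMap.proj i).comp (fderiv ℝ v x)))) x := by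
      simp only [dot]
      exact HasFDerivAt.fun_sum fun i _ => (hproj v hvx i).fun_mul (hproj w hwx i)
    have hgx := hRφ.fun_mul hdotx
    have hFx := hgx.fun_smul hvx
    rw [hFx.fderiv]
    have hdiv' : (∑ i, fderiv ℝ v x (Pi.single i 1) i) = 0 := hdiv x
    simp only [ContinuousLinearMap.add_apply, ContinuousLinearMap.smul_apply,
      ContinuousLinearMap.smulRight_apply, ContinuousLinearMap.coe_sum', Finset.sum_apply,
      ContinuousLinearMap.coe_comp', Function.comp_apply, ContinuousLinearMap.proj_apply,
      Pi.add_apply, Pi.smul_apply, smul_eq_mul]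
    rw [Finset.sum_add_distrib, ← Finset.mul_sum, hdiv', mul_zero, zero_add]
    simp only [hA, hI, hB, dot, grad, jac, Matrix.mulVec, dotProduct,
      Matrix.transpose_apply, Matrix.of_apply]
    have h1 : ∑ i, (∑ k, fderiv ℝ v x (Pi.single k 1) i * v x k) * w x i
        = ∑ i, (∑ k, w x k * fderiv ℝ v x (Pi.single i 1) k) * v x i := by
      simp only [Finset.sum_mul]
      rw [Finset.sum_comm]
      exact Finset.sum_congr rfl fun i _ => Finset.sum_congr rfl fun k _ => by ring
    rw [h1]
    simp only [Finset.mul_sum, Finset.sum_mul, add_mul, mul_add, Finset.sum_add_distrib]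
    have hQ1 : ∑ x_1 : Fin (n+1), ∑ i : Fin (n+1),
          deriv R (φ x) * (v x i * fderiv ℝ φ x (Pi.single i 1)) * (v x x_1 * w x x_1)
        = ∑ x_1 : Fin (n+1), ∑ i : Fin (n+1),
          v x i * w x i * (deriv R (φ x) * fderiv ℝ φ x (Pi.single x_1 1)) * v x x_1 := by
      rw [Finset.sum_comm]
      exact Finset.sum_congr rfl fun i _ => Finset.sum_congr rfl fun k _ => by ring
    have hQ2 : ∑ x_1 : Fin (n+1), ∑ i : Fin (n+1),
          R (φ x) * (w x i * fderiv ℝ v x (Pi.single x_1 1) i * v x x_1)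
        = ∑ x_1 : Fin (n+1), ∑ i : Fin (n+1),
          R (φ x) * (w x i * fderiv ℝ v x (Pi.single x_1 1) i) * v x x_1 :=
      Finset.sum_congr rfl fun i _ => Finset.sum_congr rfl fun k _ => by ring
    have hQ3 : ∑ x_1 : Fin (n+1), ∑ i : Fin (n+1),
          R (φ x) * (v x x_1 * (fderiv ℝ w x (Pi.single x_1 1) i * v x i))
        = ∑ x_1 : Fin (n+1), ∑ i : Fin (n+1),
          R (φ x) * (v x i * fderiv ℝ w x (Pi.single x_1 1) i) * v x x_1 :=
      Finset.sum_congr rfl fun i _ => Finset.sum_congr rfl fun k _ => by ring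
    rw [hQ1, hQ2, hQ3]
    ring
  -- continuity of the three integrands
  have cDv : ∀ (i j : Fin (n+1)), Continuous fun x => fderiv ℝ v x (Pi.single j 1) i := fun i j =>
    (continuous_apply i).comp ((hv.continuous_fderiv one_ne_zero).clm_apply continuous_const)
  have cDw : ∀ (i j : Fin (n+1)), Continuous fun x => fderiv ℝ w x (Pi.single j 1) i := fun i j =>
    (continuous_apply i).comp ((hw.continuous_fderiv one_ne_zero).clm_apply continuous_const)
  have cDφ : ∀ (i : Fin (n+1)), Continuous fun x => fderiv ℝ φ x (Pi.single i 1) := fun i =>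
    (hφ.continuous_fderiv one_ne_zero).clm_apply continuous_const
  have cvi : ∀ i, Continuous fun x => v x i := fun i => (continuous_apply i).comp hv.continuous
  have cwi : ∀ i, Continuous fun x => w x i := fun i => (continuous_apply i).comp hw.continuous
  have hAc : Continuous A := by
    simp only [hA, dot, grad]
    exact (((hR.continuous_deriv le_rfl).comp hφ.continuous).mul
      (continuous_finset_sum _ fun i _ => (cvi i).mul (cDφ i))).mul
      (continuous_finset_sum _ fun i _ => (cvi i).mul (cwi i))
  have hIc : Continuous I := by
    simp only [hI, dot, jac, Matrix.mulVec, dotProduct, Matrix.of_apply]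
    exact (hR.continuous.comp hφ.continuous).mul
      (continuous_finset_sum _ fun i _ =>
        (continuous_finset_sum _ fun j _ => (cDv i j).mul (cvi j)).mul (cwi i))
  have hBc : Continuous B := by
    simp only [hB, dot, jac, Matrix.mulVec, dotProduct, Matrix.transpose_apply,
      Matrix.of_apply]
    exact (hR.continuous.comp hφ.continuous).mul
      (continuous_finset_sum _ fun i _ =>
        (cvi i).mul (continuous_finset_sum _ fun j _ => (cDw j i).mul (cvi j)))
  -- compact support of the three integrands
  have hsupp3 : ∀ (f : (Fin (n+1) → ℝ) → ℝ), (∀ y, v y = 0 → f y = 0) →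
      HasCompactSupport f := fun f hf =>
    hvsupp.mono fun y hy => by
      simp only [Function.mem_support] at hy ⊢
      exact fun h0 => hy (hf y h0)
  have hAs : HasCompactSupport A := hsupp3 A fun y h0 => by simp [hA, dot, h0]
  have hIs : HasCompactSupport I := hsupp3 I fun y h0 => by
    simp [hI, dot, Matrix.mulVec, dotProduct, h0]
  have hBs : HasCompactSupport B := hsupp3 B fun y h0 => by simp [hB, dot, h0]
  have hAint : Integrable A := hAc.integrable_of_hasCompactSupport hAs
  have hIint : Integrable I := hIc.integrable_of_hasCompactSupport hIs
  have hBint : Integrable B := hBc.integrable_of_hasCompactSupport hBs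
  -- the divergence theorem gives the basic identity
  have hzero : (∫ x, A x) + (∫ x, I x) + (∫ x, B x) = 0 := by
    have h0 : ∫ x, (A x + I x + B x) = 0 := by
      rw [← integral_divergence_zero F hFC hFs]
      exact integral_congr_ae (Filter.Eventually.of_forall fun x => (hpt x).symm)
    have e1 : (∫ x, (A x + I x + B x)) = (∫ x, (A x + I x)) + ∫ x, B x :=
      integral_add (hAint.add hIint) hBint
    have e2 : (∫ x, (A x + I x)) = (∫ x, A x) + ∫ x, I x := integral_add hAint hIint
    linarith [h0, e1, e2]
  -- the last integrand coincides with `I`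
  have h3 : (∫ x, R (φ x) * dot (v x) (Matrix.mulVec (jac v x)ᵀ (w x))) = ∫ x, I x := by
    refine integral_congr_ae (Filter.Eventually.of_forall fun x => ?_)
    simp only [hI, dot, jac, Matrix.mulVec, dotProduct, Matrix.transpose_apply,
      Matrix.of_apply, Finset.mul_sum, Finset.sum_mul]
    rw [Finset.sum_comm]
    exact Finset.sum_congr rfl fun i _ => Finset.sum_congr rfl fun k _ => by ring
  rw [h3]
  linarith [hzero]
end
end

section
/- Let d ≥ 1. Suppose v : ℝ^d × (0,T) → ℝ^d is continuously differentiable with div v = 0 everywhere, φ, μ : ℝ^d × (0,T) → ℝ are twice continuously differentiable in space and continuously differentiable in time, M : ℝ → ℝ is continuously differentiable, and the phase-field equation ∂ₜφ + ⟨v,∇φ⟩ − div(M(φ)∇μ) = 0 holds pointwise. Set j := −M(φ)∇μ and ρ := ρ(φ) with the affine density function. Then the mass balance ∂ₜρ + div(ρ v + ρ′ j) = 0 holds pointwise on ℝ^d × (0,T). -/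
open MeasureTheory Set Matrix

noncomputable section

/-- Pointwise mass balance `∂ₜρ + div(ρv + ρ′j) = 0` with mass flux including
the diffusive contribution `ρ′j = −ρ′M(φ)∇μ`, satisfied by the model of
Abels, Garcke and Grün. -/
theorem mass_balance
    {d : ℕ} (hd : 1 ≤ d) {T : ℝ} (hT : 0 < T)
    {ρ₁ ρ₂ : ℝ} (hρ₁ : 0 < ρ₁) (hρ₂ : 0 < ρ₂)
    (M : ℝ → ℝ) (hM : ContDiff ℝ 1 M)
    (v : ℝ → (Fin d → ℝ) → Fin d → ℝ) (φ μ : ℝ → (Fin d → ℝ) → ℝ)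
    (hv : ContDiff ℝ 1 fun q : ℝ × (Fin d → ℝ) => v q.1 q.2)
    -- φ and μ are twice continuously differentiable in space and
    -- continuously differentiable in time
    (hφx : ∀ t, ContDiff ℝ 2 (φ t)) (hφt : ∀ x, ContDiff ℝ 1 fun s => φ s x)
    (hμx : ∀ t, ContDiff ℝ 2 (μ t)) (hμt : ∀ x, ContDiff ℝ 1 fun s => μ s x)
    -- incompressibility everywhere
    (hdiv : ∀ t x, divg (v t) x = 0)
    -- phase-field equation: ∂ₜφ + ⟨v,∇φ⟩ − div(M(φ)∇μ) = 0
    (hph : ∀ t ∈ Ioo (0:ℝ) T, ∀ x,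
      deriv (fun s => φ s x) t + dot (v t x) (grad (φ t) x)
        - (∑ k, fderiv ℝ (fun y => M (φ t y) * grad (μ t) y k) x (Pi.single k 1)) = 0) :
    ∀ t ∈ Ioo (0:ℝ) T, ∀ x,
      deriv (fun s => rhoAff ρ₁ ρ₂ (φ s x)) t
        + divg (fun y => fun k => rhoAff ρ₁ ρ₂ (φ t y) * v t y k
            + (ρ₂ - ρ₁) / 2 * (-(M (φ t y) * grad (μ t) y k))) x = 0 := by

  intro t ht x
  have key := hph t ht x
  -- basic differentiability facts at time t
  have hφd : Differentiable ℝ (φ t) := (hφx t).differentiable (by norm_num)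
  have hvt : Differentiable ℝ (fun y => v t y) :=
    (hv.differentiable one_ne_zero).comp ((differentiable_const t).prodMk differentiable_id)
  have hvi : ∀ i, Differentiable ℝ (fun y => v t y i) := fun i =>
    (ContinuousLinearMap.proj (R := ℝ) (φ := fun _ : Fin d => ℝ) i).differentiable.comp hvt
  have hgd : ∀ k, Differentiable ℝ (fun y => grad (μ t) y k) := by
    intro k
    have h1 : ContDiff ℝ 1 (fun y => fderiv ℝ (μ t) y (Pi.single k 1)) :=
      ((hμx t).fderiv_right (by norm_num)).clm_apply contDiff_const
    simpa [grad] using h1.differentiable one_ne_zero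
  have hMφ : Differentiable ℝ (fun y => M (φ t y)) :=
    (hM.comp ((hφx t).of_le one_le_two)).differentiable one_ne_zero
  have hP : ∀ k, DifferentiableAt ℝ (fun y => M (φ t y) * grad (μ t) y k) x :=
    fun k => (hMφ.mul (hgd k)) x
  have hρφ : Differentiable ℝ (fun y => rhoAff ρ₁ ρ₂ (φ t y)) := by
    simp only [rhoAff]
    exact (differentiable_const _).add (hφd.const_mul _)
  have hcompk : ∀ k, DifferentiableAt ℝ
      (fun y => rhoAff ρ₁ ρ₂ (φ t y) * v t y k
        + (ρ₂ - ρ₁) / 2 * (-(M (φ t y) * grad (μ t) y k))) x :=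
    fun k => ((hρφ x).mul (hvi k x)).add (((hP k).neg).const_mul _)
  -- time derivative
  have hderiv : deriv (fun s => rhoAff ρ₁ ρ₂ (φ s x)) t
      = (ρ₂ - ρ₁) / 2 * deriv (fun s => φ s x) t := by
    have hdφ : DifferentiableAt ℝ (fun s => φ s x) t := (hφt x).differentiable one_ne_zero t
    simp only [rhoAff]
    rw [deriv_const_add, deriv_const_mul _ hdφ]
  -- expand the divergence into components
  have hdivg : divg (fun y => fun k => rhoAff ρ₁ ρ₂ (φ t y) * v t y k
        + (ρ₂ - ρ₁) / 2 * (-(M (φ t y) * grad (μ t) y k))) x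
      = ∑ i, fderiv ℝ (fun y => rhoAff ρ₁ ρ₂ (φ t y) * v t y i
        + (ρ₂ - ρ₁) / 2 * (-(M (φ t y) * grad (μ t) y i))) x (Pi.single i 1) := by
    simp only [divg]
    refine Finset.sum_congr rfl fun i _ => ?_
    rw [fderiv_pi hcompk]
    simp
  -- compute each component
  have hterm : ∀ i, fderiv ℝ (fun y => rhoAff ρ₁ ρ₂ (φ t y) * v t y i
        + (ρ₂ - ρ₁) / 2 * (-(M (φ t y) * grad (μ t) y i))) x (Pi.single i 1)
      = (ρ₂ - ρ₁) / 2 * (v t x i * fderiv ℝ (φ t) x (Pi.single i 1))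
        + rhoAff ρ₁ ρ₂ (φ t x) * fderiv ℝ (fun y => v t y i) x (Pi.single i 1)
        - (ρ₂ - ρ₁) / 2
            * fderiv ℝ (fun y => M (φ t y) * grad (μ t) y i) x (Pi.single i 1) := by
    intro i
    rw [fderiv_fun_add ((hρφ x).fun_mul (hvi i x)) (((hP i).fun_neg).const_mul _),
      fderiv_const_mul ((hP i).fun_neg) _, fderiv_fun_neg, fderiv_fun_mul (hρφ x) (hvi i x)]
    have hra : fderiv ℝ (fun y => rhoAff ρ₁ ρ₂ (φ t y)) x
        = ((ρ₂ - ρ₁) / 2) • fderiv ℝ (φ t) x := by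
      simp only [rhoAff]
      rw [fderiv_const_add, fderiv_const_mul (hφd x)]
    rw [hra]
    simp only [ContinuousLinearMap.add_apply, ContinuousLinearMap.smul_apply,
      ContinuousLinearMap.neg_apply, smul_eq_mul]
    ring
  -- divergence of v vanishes componentwise sum
  have hsumv : ∑ i, fderiv ℝ (fun y => v t y i) x (Pi.single i 1) = 0 := by
    have h0 := hdiv t x
    simp only [divg] at h0
    rw [← h0]
    refine Finset.sum_congr rfl fun i _ => ?_
    rw [show (v t) = fun y k => v t y k from rfl, fderiv_pi (fun k => hvi k x)]
    simp
  have hsum : (∑ i, fderiv ℝ (fun y => rhoAff ρ₁ ρ₂ (φ t y) * v t y i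
        + (ρ₂ - ρ₁) / 2 * (-(M (φ t y) * grad (μ t) y i))) x (Pi.single i 1))
      = (ρ₂ - ρ₁) / 2 * (∑ i, v t x i * fderiv ℝ (φ t) x (Pi.single i 1))
        + rhoAff ρ₁ ρ₂ (φ t x) * (∑ i, fderiv ℝ (fun y => v t y i) x (Pi.single i 1))
        - (ρ₂ - ρ₁) / 2
            * ∑ i, fderiv ℝ (fun y => M (φ t y) * grad (μ t) y i) x (Pi.single i 1) := by
    rw [Finset.mul_sum, Finset.mul_sum, Finset.mul_sum, ← Finset.sum_add_distrib,
      ← Finset.sum_sub_distrib]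
    exact Finset.sum_congr rfl fun i _ => hterm i
  rw [hderiv, hdivg, hsum, hsumv, mul_zero]
  simp only [dot, grad] at key ⊢
  linear_combination (ρ₂ - ρ₁) / 2 * key
end
end
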